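/- arXiv:2212.06337 — 7 statements merged into one kernel-verified Lean document; each statement's English description precedes it below -/
import Mathlib

section
/- Let $(\alpha_n)$, $(\beta_n)$, $(\gamma_n)$, $(\delta_n)$, $(u_n)$, $(v_n)$ be sequences of complex numbers such that $\beta_n = \sum_{k=0}^n \alpha_k u_{n-k} v_{n+k}$ for all $n$, $\gamma_n = \sum_{k=n}^\infty \delta_k u_{k-n} v_{k+n}$ for all $n$ (with the series absolutely convergent), and the double series $\sum_{n,k} |\alpha_k u_{n-k} v_{n+k} \delta_n|$ converges. Then $\sum_{n=0}^\infty \alpha_n \gamma_n = \sum_{n=0}^\infty \beta_n \delta_n$. -/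
/-- Bailey's transform for complex sequences. -/
theorem bailey_transform (α β γ δ u v : ℕ → ℂ)
    (hβ : ∀ n, β n = ∑ k ∈ Finset.range (n + 1), α k * u (n - k) * v (n + k))
    (hγ : ∀ n, HasSum (fun j : ℕ => δ (n + j) * u j * v (2 * n + j)) (γ n))
    (habs : Summable (fun p : ℕ × ℕ =>
      ‖(if p.2 ≤ p.1 then α p.2 * u (p.1 - p.2) * v (p.1 + p.2) * δ p.1 else 0)‖)) :
    ∑' n, α n * γ n = ∑' n, β n * δ n := by
  set f : ℕ × ℕ → ℂ := fun p =>
    if p.2 ≤ p.1 then α p.2 * u (p.1 - p.2) * v (p.1 + p.2) * δ p.1 else 0 with hf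
  have hsum : Summable f := by
    rw [← summable_norm_iff]; exact habs
  have h1 : ∀ n : ℕ, (∑' k, f (n, k)) = β n * δ n := by
    intro n
    have : (∑' k, f (n, k)) = ∑ k ∈ Finset.range (n + 1), f (n, k) := by
      apply tsum_eq_sum
      intro k hk
      simp only [Finset.mem_range, Nat.lt_add_one_iff, not_le] at hk
      simp [hf, Nat.not_le.mpr hk, not_le.mpr hk]
    rw [this, hβ, Finset.sum_mul]
    apply Finset.sum_congr rfl
    intro k hk
    simp only [Finset.mem_range, Nat.lt_add_one_iff] at hk
    simp [hf, hk]
  have h2 : ∀ k : ℕ, (∑' n, f (n, k)) = α k * γ k := by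
    intro k
    have hinj : Function.Injective (fun j : ℕ => k + j) := add_right_injective k
    have hz : ∀ n ∉ Set.range (fun j : ℕ => k + j), f (n, k) = 0 := by
      intro n hn
      have : ¬ k ≤ n := by
        intro h
        exact hn ⟨n - k, show k + (n - k) = n by omega⟩
      simp [hf, this]
    have hcomp : HasSum (fun j : ℕ => f (k + j, k)) (α k * γ k) := by
      have := (hγ k).mul_left (α k)
      convert this using 3 with j
      · rfl
      have hk : k ≤ k + j := Nat.le_add_right _ _
      simp only [hf, if_pos hk]
      have h1 : k + j - k = j := by omega
      have h2 : k + j + k = 2 * k + j := by omega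
      rw [h1, h2]; ring
    have := (hinj.hasSum_iff hz).mp hcomp
    exact this.tsum_eq
  calc ∑' n, α n * γ n = ∑' k, ∑' n, f (n, k) := by
        exact (tsum_congr fun k => (h2 k).symm)
    _ = ∑' n, ∑' k, f (n, k) :=
        Summable.tsum_comm' hsum hsum.prod_factor hsum.prod_symm.prod_factor
    _ = ∑' n, β n * δ n := tsum_congr h1
end

section
/- Let $|q|<1$ and $a \in \mathbb{C}$ with no vanishing denominators. If $(\alpha_n,\beta_n)$ is a Bailey pair relative to $a$, i.e. $\beta_n = \sum_{k=0}^n \alpha_k/((q;q)_{n-k}(aq;q)_{n+k})$ for all $n$, then the pair $(\alpha'_n,\beta'_n)$ defined by $\alpha'_n = a^n q^{n^2}\alpha_n$ and $\beta'_n = \sum_{j=0}^n \frac{a^j q^{j^2}}{(q;q)_{n-j}}\beta_j$ is also a Bailey pair relative to $a$: $\beta'_n = \sum_{k=0}^n \alpha'_k/((q;q)_{n-k}(aq;q)_{n+k})$ for all $n$. -/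
/-- The q-Pochhammer symbol `(x; q)_n`. -/
def qPoch (q x : ℂ) (n : ℕ) : ℂ := ∏ j ∈ Finset.range n, (1 - x * q ^ j)

lemma qPoch_zero (q x : ℂ) : qPoch q x 0 = 1 := by simp [qPoch]

lemma qPoch_succ (q x : ℂ) (n : ℕ) :
    qPoch q x (n + 1) = qPoch q x n * (1 - x * q ^ n) :=
  Finset.prod_range_succ _ _

lemma qPoch_add (q x : ℂ) (s t : ℕ) :
    qPoch q x (s + t) = qPoch q x s * qPoch q (x * q ^ s) t := by
  unfold qPoch
  rw [Finset.prod_range_add]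
  congr 1
  refine Finset.prod_congr rfl fun j _ => ?_
  rw [pow_add]; ring

/-- Gaussian binomial coefficient. -/
def qpb (q : ℂ) : ℕ → ℕ → ℂ
  | 0, 0 => 1
  | 0, _+1 => 0
  | _+1, 0 => 1
  | N+1, m+1 => qpb q N (m+1) + q ^ (N - m) * qpb q N m

lemma qpb_zero (q : ℂ) (N : ℕ) : qpb q N 0 = 1 := by cases N <;> rfl

lemma qpb_pascal (q : ℂ) (N m : ℕ) :
    qpb q (N+1) (m+1) = qpb q N (m+1) + q ^ (N - m) * qpb q N m := rfl

lemma qpb_overflow (q : ℂ) : ∀ N m : ℕ, N < m → qpb q N m = 0 := by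
  intro N
  induction N with
  | zero => intro m hm; match m, hm with | (m+1), _ => rfl
  | succ N ih =>
    intro m hm
    match m, hm with
    | (m+1), hm =>
      rw [qpb_pascal, ih (m+1) (by omega), ih m (by omega)]; ring

lemma qpb_diag (q : ℂ) : ∀ N : ℕ, qpb q N N = 1 := by
  intro N
  induction N with
  | zero => rfl
  | succ N ih =>
    rw [qpb_pascal, qpb_overflow q N (N+1) (by omega), ih, Nat.sub_self]
    simp

lemma qpb_poch (q : ℂ) : ∀ N m : ℕ, m ≤ N →
    qPoch q q m * qPoch q q (N - m) * qpb q N m = qPoch q q N := by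
  intro N
  induction N with
  | zero =>
    intro m hm; interval_cases m
    simp [qpb_zero, qPoch_zero]
  | succ N ih =>
    intro m hm
    match m with
    | 0 => simp [qpb_zero, qPoch_zero]
    | (m+1) =>
      rcases Nat.lt_or_ge (m+1) (N+1) with h | h
      · obtain ⟨d, rfl⟩ : ∃ d, N = m + 1 + d := ⟨N - (m+1), by omega⟩
        have e1 := ih (m+1) (by omega)
        have e2 := ih m (by omega)
        rw [qpb_pascal]
        simp only [show m + 1 + d - (m+1) = d from by omega,
          show m + 1 + d - m = d + 1 from by omega,
          show m + 1 + d + 1 - (m+1) = d + 1 from by omega] at e1 e2 ⊢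
        rw [qPoch_succ q q (m + 1 + d)]
        rw [qPoch_succ q q d] at e2 ⊢
        rw [qPoch_succ q q m] at e1 ⊢
        linear_combination (1 - q * q ^ d) * e1 + (1 - q * q ^ m) * q ^ (d+1) * e2
      · have hm' : m = N := by omega
        subst hm'
        rw [Nat.sub_self, qpb_diag, qPoch_zero]
        ring

lemma G_lemma (q x : ℂ) : ∀ (N b : ℕ),
    ∑ m ∈ Finset.range (N+1),
      qpb q N m * x ^ m * q ^ (m * (m + b)) * qPoch q (x * q ^ (m + b + 1)) (N - m) = 1 := by
  intro N
  induction N with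
  | zero => intro b; simp [qpb_zero, qPoch_zero]
  | succ N ih =>
    intro b
    rw [Finset.sum_range_succ']
    have term0 : qpb q (N+1) 0 * x ^ 0 * q ^ (0 * (0 + b)) *
        qPoch q (x * q ^ (0 + b + 1)) (N + 1 - 0) =
        (qpb q N 0 * x ^ 0 * q ^ (0 * (0 + b)) * qPoch q (x * q ^ (0 + b + 1)) (N - 0))
          * (1 - x * q ^ (N + b + 1)) := by
      rw [qpb_zero, qpb_zero]
      rw [show N + 1 - 0 = N + 1 from rfl, show N - 0 = N from rfl, qPoch_succ]
      rw [show (0:ℕ) + b + 1 = b + 1 from by omega]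
      rw [show x * q ^ (b+1) * q ^ N = x * q ^ (N + b + 1) from by
        rw [mul_assoc, ← pow_add, show b + 1 + N = N + b + 1 from by omega]]
      ring
    have split : ∀ m ∈ Finset.range (N+1),
        qpb q (N+1) (m+1) * x ^ (m+1) * q ^ ((m+1) * (m+1 + b)) *
          qPoch q (x * q ^ (m+1 + b + 1)) (N + 1 - (m+1)) =
        (qpb q N (m+1) * x ^ (m+1) * q ^ ((m+1) * (m+1+b)) *
          qPoch q (x * q ^ ((m+1) + b + 1)) (N - (m+1))) * (1 - x * q ^ (N + b + 1))
        + x * q ^ (N + b + 1) *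
          (qpb q N m * x ^ m * q ^ (m * (m + (b+1))) *
            qPoch q (x * q ^ (m + (b+1) + 1)) (N - m)) := by
      intro m hm
      rw [Finset.mem_range] at hm
      rw [qpb_pascal]
      rcases Nat.lt_or_ge m N with h | h
      · obtain ⟨d, rfl⟩ : ∃ d, N = m + 1 + d := ⟨N - (m+1), by omega⟩
        simp only [show m + 1 + d - (m+1) = d from by omega,
          show m + 1 + d - m = d + 1 from by omega,
          show m + 1 + d + 1 - (m+1) = d + 1 from by omega,
          show m + 1 + b + 1 = m + b + 2 from by omega,
          show m + (b+1) + 1 = m + b + 2 from by omega,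
          show m + 1 + d + b + 1 = m + d + b + 2 from by omega]
        rw [qPoch_succ q (x * q ^ (m + b + 2)) d]
        ring
      · rw [qpb_overflow q N (m+1) (by omega),
          show N - m = 0 from by omega,
          show N + 1 - (m+1) = 0 from by omega,
          show N - (m+1) = 0 from by omega,
          show N + b + 1 = m + b + 1 from by omega,
          qPoch_zero, qPoch_zero, pow_zero]
        ring
    rw [Finset.sum_congr rfl split, term0, Finset.sum_add_distrib, ← Finset.sum_mul,
      ← Finset.mul_sum, ih (b+1), mul_one]
    have hsum : ∑ m ∈ Finset.range (N+1+1),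
        qpb q N m * x ^ m * q ^ (m * (m+b)) * qPoch q (x * q ^ (m + b + 1)) (N - m) = 1 := by
      rw [Finset.sum_range_succ, qpb_overflow q N (N+1) (by omega)]
      simp only [zero_mul, add_zero]
      exact ih b
    rw [Finset.sum_range_succ'] at hsum
    linear_combination (1 - x * q ^ (N + b + 1)) * hsum

lemma div_id (q a : ℂ) (hden : ∀ m : ℕ, qPoch q q m ≠ 0 ∧ qPoch q (a * q) m ≠ 0)
    (N b : ℕ) :
    ∑ m ∈ Finset.range (N+1),
      a ^ m * q ^ (m * (m + b)) /
        (qPoch q q m * qPoch q q (N - m) * qPoch q (a * q) (m + b)) =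
    1 / (qPoch q q N * qPoch q (a * q) (N + b)) := by
  have hNden : qPoch q q N * qPoch q (a * q) (N + b) ≠ 0 :=
    mul_ne_zero (hden N).1 (hden (N+b)).2
  rw [eq_div_iff hNden, Finset.sum_mul]
  have key : ∀ m ∈ Finset.range (N+1),
      a ^ m * q ^ (m * (m + b)) /
        (qPoch q q m * qPoch q q (N - m) * qPoch q (a * q) (m + b)) *
        (qPoch q q N * qPoch q (a * q) (N + b)) =
      qpb q N m * a ^ m * q ^ (m * (m + b)) * qPoch q (a * q ^ (m + b + 1)) (N - m) := by
    intro m hm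
    rw [Finset.mem_range] at hm
    have hmN : m ≤ N := by omega
    have hsplit : qPoch q (a * q) (N + b) =
        qPoch q (a * q) (m + b) * qPoch q (a * q ^ (m + b + 1)) (N - m) := by
      have h : N + b = (m + b) + (N - m) := by omega
      rw [h, qPoch_add]
      congr 2
      rw [mul_assoc, ← pow_succ']
    have hN : qPoch q q N = qPoch q q m * qPoch q q (N - m) * qpb q N m :=
      (qpb_poch q N m hmN).symm
    rw [hsplit, hN]
    field_simp [(hden m).1, (hden (N - m)).1, (hden (m + b)).2]
  rw [Finset.sum_congr rfl key]
  exact G_lemma q a N b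

/-- Bailey's lemma, special case `ρ₁, ρ₂ → ∞`: a Bailey pair relative to `a`
yields a new Bailey pair relative to `a`. -/
theorem bailey_lemma_special (q a : ℂ) (hq : ‖q‖ < 1)
    (hden : ∀ m : ℕ, qPoch q q m ≠ 0 ∧ qPoch q (a * q) m ≠ 0)
    (α β : ℕ → ℂ)
    (hpair : ∀ n : ℕ, β n = ∑ k ∈ Finset.range (n + 1),
      α k / (qPoch q q (n - k) * qPoch q (a * q) (n + k)))
    (α' β' : ℕ → ℂ)
    (hα' : ∀ n : ℕ, α' n = a ^ n * q ^ (n ^ 2) * α n)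
    (hβ' : ∀ n : ℕ, β' n = ∑ j ∈ Finset.range (n + 1),
      a ^ j * q ^ (j ^ 2) / qPoch q q (n - j) * β j) :
    ∀ n : ℕ, β' n = ∑ k ∈ Finset.range (n + 1),
      α' k / (qPoch q q (n - k) * qPoch q (a * q) (n + k)) := by
  intro n
  rw [hβ']
  have step1 : ∀ j ∈ Finset.range (n+1),
      a ^ j * q ^ (j ^ 2) / qPoch q q (n - j) * β j =
      ∑ k ∈ Finset.range (j+1),
        a ^ j * q ^ (j ^ 2) * α k /
          (qPoch q q (n - j) * (qPoch q q (j - k) * qPoch q (a * q) (j + k))) := by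
    intro j _
    rw [hpair j, Finset.mul_sum]
    refine Finset.sum_congr rfl fun k _ => ?_
    rw [div_mul_div_comm]
  rw [Finset.sum_congr rfl step1]
  have swap : ∑ j ∈ Finset.range (n+1), ∑ k ∈ Finset.range (j+1),
      a ^ j * q ^ (j ^ 2) * α k /
        (qPoch q q (n - j) * (qPoch q q (j - k) * qPoch q (a * q) (j + k))) =
      ∑ k ∈ Finset.range (n+1), ∑ j ∈ Finset.Ico k (n+1),
      a ^ j * q ^ (j ^ 2) * α k /
        (qPoch q q (n - j) * (qPoch q q (j - k) * qPoch q (a * q) (j + k))) := by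
    have h := Finset.sum_Ico_Ico_comm 0 (n+1) (fun k j =>
      a ^ j * q ^ (j ^ 2) * α k /
        (qPoch q q (n - j) * (qPoch q q (j - k) * qPoch q (a * q) (j + k))))
    simp only [Nat.Ico_zero_eq_range] at h
    rw [← h]
  rw [swap]
  refine Finset.sum_congr rfl fun k hk => ?_
  rw [Finset.mem_range] at hk
  have hkn : k ≤ n := by omega
  rw [Finset.sum_Ico_eq_sum_range]
  rw [show n + 1 - k = (n - k) + 1 from by omega]
  have inner : ∀ m ∈ Finset.range ((n - k) + 1),
      a ^ (k + m) * q ^ ((k + m) ^ 2) * α k /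
        (qPoch q q (n - (k + m)) * (qPoch q q ((k + m) - k) * qPoch q (a * q) ((k + m) + k))) =
      α k * (a ^ k * q ^ (k ^ 2)) *
        (a ^ m * q ^ (m * (m + 2 * k)) /
          (qPoch q q m * qPoch q q ((n - k) - m) * qPoch q (a * q) (m + 2 * k))) := by
    intro m hm
    rw [Finset.mem_range] at hm
    rw [show (k + m) - k = m from by omega, show n - (k + m) = (n - k) - m from by omega,
      show (k + m) + k = m + 2 * k from by omega,
      show a ^ (k + m) = a ^ k * a ^ m from pow_add a k m,
      show q ^ ((k + m) ^ 2) = q ^ (k ^ 2) * q ^ (m * (m + 2 * k)) from by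
        rw [← pow_add]; congr 1; ring]
    rw [mul_div_assoc, mul_div_assoc]
    rw [show qPoch q q ((n-k) - m) * (qPoch q q m * qPoch q (a*q) (m + 2*k)) =
      qPoch q q m * qPoch q q ((n-k) - m) * qPoch q (a*q) (m + 2*k) from by ring]
    ring
  rw [Finset.sum_congr rfl inner, ← Finset.mul_sum, div_id q a hden (n - k) (2 * k)]
  rw [hα' k, show (n - k) + 2 * k = n + k from by omega]
  ring
end

section
/- For $|q|<1$ and any $\zeta \neq 0$, Jacobi's triple product identity holds: $\sum_{n\in\mathbb{Z}} (-1)^n q^{n(n-1)/2} \zeta^n = (q;q)_\infty\,(\zeta;q)_\infty\,(q/\zeta;q)_\infty$. -/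
open Finset Filter Topology

namespace JTP

noncomputable def Pq (q : ℂ) (m : ℕ) : ℂ := ∏ i ∈ range m, (1 - q ^ (i + 1))

noncomputable def bq (q : ℂ) (M j : ℕ) : ℂ :=
  if j ≤ M then Pq q M / (Pq q j * Pq q (M - j)) else 0

variable {q : ℂ} (hq : ‖q‖ < 1)

include hq in
lemma fac_ne_zero (m : ℕ) : (1 : ℂ) - q ^ (m + 1) ≠ 0 := by
  have h : ‖q ^ (m + 1)‖ < 1 := by
    rw [norm_pow]
    calc ‖q‖ ^ (m + 1) ≤ ‖q‖ ^ 1 := by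
          apply pow_le_pow_of_le_one (norm_nonneg q) hq.le
          omega
    _ < 1 := by simpa using hq
  intro h0
  rw [sub_eq_zero] at h0
  rw [← h0] at h
  simp at h

include hq in
lemma Pq_ne_zero (m : ℕ) : Pq q m ≠ 0 :=
  Finset.prod_ne_zero_iff.2 fun i _ => fac_ne_zero hq i

lemma Pq_succ (m : ℕ) : Pq q (m + 1) = Pq q m * (1 - q ^ (m + 1)) := by
  simp [Pq, Finset.prod_range_succ]

private lemma pascal_aux (C A B x y z w : ℂ) (hA : A ≠ 0) (hB : B ≠ 0) (hx : x ≠ 0)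
    (hy : y ≠ 0) (hz : z = y + w * x) :
    C * z / (A * x * (B * y)) = C / (A * x * B) + w * (C / (A * (B * y))) := by
  subst hz
  field_simp

include hq in
lemma bq_pascal (M j : ℕ) :
    bq q (M + 1) (j + 1) = bq q M (j + 1) + q ^ (M - j) * bq q M j := by
  rcases lt_trichotomy j M with h | rfl | h
  · have h1 : j + 1 ≤ M + 1 := by omega
    have h2 : j + 1 ≤ M := by omega
    have h3 : j ≤ M := by omega
    rw [bq, bq, bq, if_pos h1, if_pos h2, if_pos h3]
    have e1 : M + 1 - (j + 1) = M - j := by omega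
    have e2 : M - j = (M - (j + 1)) + 1 := by omega
    rw [e1, e2, Pq_succ M, Pq_succ (M - (j+1)), Pq_succ j]
    have key : (1 : ℂ) - q ^ (M + 1) =
        (1 - q ^ (M - (j+1) + 1)) + q ^ (M - (j+1) + 1) * (1 - q ^ (j + 1)) := by
      have hh : (M - (j+1) + 1) + (j + 1) = M + 1 := by omega
      rw [← hh, pow_add]
      ring
    exact pascal_aux (Pq q M) (Pq q j) (Pq q (M - (j+1))) _ _ _ _
      (Pq_ne_zero hq j) (Pq_ne_zero hq (M - (j+1))) (fac_ne_zero hq j)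
      (fac_ne_zero hq (M - (j+1))) key
  · have hn : ¬ (j + 1 ≤ j) := by omega
    rw [bq, bq, bq, if_pos (le_refl (j+1)), if_neg hn, if_pos (le_refl j)]
    simp only [Nat.sub_self]
    have h0 : Pq q 0 = 1 := by simp [Pq]
    rw [h0]
    have hP := Pq_ne_zero hq (j + 1)
    have hPM := Pq_ne_zero hq j
    field_simp
    ring
  · have h1 : ¬ (j + 1 ≤ M + 1) := by omega
    have h2 : ¬ (j + 1 ≤ M) := by omega
    have h3 : ¬ (j ≤ M) := by omega
    rw [bq, bq, bq, if_neg h1, if_neg h2, if_neg h3]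
    ring

include hq in
lemma bq_zero (M : ℕ) : bq q M 0 = 1 := by
  rw [bq, if_pos (Nat.zero_le M)]
  have h0 : Pq q 0 = 1 := by simp [Pq]
  simp only [Nat.sub_zero, h0, one_mul]
  exact div_self (Pq_ne_zero hq M)

lemma bq_of_gt {M j : ℕ} (h : M < j) : bq q M j = 0 := by
  rw [bq, if_neg (by omega)]

lemma tri_succ (j : ℕ) : (j + 1) * (j + 1 - 1) / 2 = j * (j - 1) / 2 + j := by
  rcases Nat.eq_zero_or_pos j with rfl | hj0
  · simp
  · have h2 : (j + 1) * j = j * (j - 1) + 2 * j := by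
      cases j with
      | zero => simp
      | succ j' => simp only [Nat.add_sub_cancel]; ring
    simp only [Nat.add_sub_cancel]
    omega

include hq in
/-- The q-binomial theorem (finite form). -/
lemma qbinom (M : ℕ) (t : ℂ) :
    ∏ k ∈ range M, (1 + t * q ^ k) =
      ∑ j ∈ range (M + 1), q ^ (j * (j - 1) / 2) * bq q M j * t ^ j := by
  induction M with
  | zero => simp [bq_zero hq]
  | succ M ih =>
    rw [Finset.prod_range_succ, ih]
    set c : ℕ → ℂ := fun j => q ^ (j * (j - 1) / 2) * bq q M j * t ^ j with hc
    set S : ℂ := ∑ j ∈ range (M + 1), c j with hS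
    have hc0 : c 0 = 1 := by simp [hc, bq_zero hq]
    -- RHS transformation
    have hRHS : ∑ j ∈ range (M + 2), q ^ (j * (j - 1) / 2) * bq q (M+1) j * t ^ j
        = 1 + ∑ j ∈ range (M + 1),
            (q ^ ((j+1) * (j+1-1) / 2) * bq q M (j+1) * t ^ (j+1) + c j * (t * q ^ M)) := by
      rw [Finset.sum_range_succ' (fun j => q ^ (j * (j - 1) / 2) * bq q (M+1) j * t ^ j) (M+1)]
      simp only [bq_zero hq, Nat.zero_mul, pow_zero, mul_one, one_mul, Nat.zero_div]
      rw [add_comm]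
      congr 1
      apply Finset.sum_congr rfl
      intro j hj
      rw [Finset.mem_range] at hj
      have hjM : j ≤ M := by omega
      rw [bq_pascal hq M j]
      have hexp : q ^ ((j+1) * (j+1-1) / 2) * q ^ (M - j) = q ^ (j * (j-1)/2) * q ^ M := by
        rw [← pow_add, ← pow_add, tri_succ j]
        congr 1
        omega
      calc q ^ ((j+1) * (j+1-1) / 2) * (bq q M (j+1) + q ^ (M - j) * bq q M j) * t ^ (j+1)
          = q ^ ((j+1) * (j+1-1) / 2) * bq q M (j+1) * t ^ (j+1)
            + (q ^ ((j+1) * (j+1-1) / 2) * q ^ (M - j)) * bq q M j * t ^ (j+1) := by ring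
        _ = _ := by rw [hexp]; simp only [hc]; ring
    rw [hRHS, Finset.sum_add_distrib]
    have hS1 : S = 1 + ∑ j ∈ range (M + 1), q ^ ((j+1) * (j+1-1) / 2) * bq q M (j+1) * t ^ (j+1) := by
      rw [Finset.sum_range_succ (fun j => q ^ ((j+1) * (j+1-1) / 2) * bq q M (j+1) * t ^ (j+1)) M]
      rw [bq_of_gt (by omega)]
      rw [hS, Finset.sum_range_succ' c M, hc0]
      ring
    have hS2 : S * (t * q ^ M) = ∑ j ∈ range (M + 1), c j * (t * q ^ M) := by
      rw [hS, Finset.sum_mul]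
    rw [mul_add, mul_one, hS2, hS1]
    ring



lemma two_mul_tri_cast (n : ℕ) : 2 * ((n * (n - 1) / 2 : ℕ) : ℤ) = (n : ℤ) * ((n : ℤ) - 1) := by
  cases n with
  | zero => simp
  | succ n' =>
    have hdvd : 2 ∣ (n' + 1) * (n' + 1 - 1) := by
      simp only [Nat.add_sub_cancel]
      rcases Nat.even_or_odd n' with h | h
      · exact Dvd.dvd.mul_left h.two_dvd _
      · exact Dvd.dvd.mul_right (Even.two_dvd h.add_one) _
    have h2 : ((n' + 1) * (n' + 1 - 1) / 2) * 2 = (n' + 1) * (n' + 1 - 1) :=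
      Nat.div_mul_cancel hdvd
    have h3 : (((n' + 1) * (n' + 1 - 1) / 2 : ℕ) : ℤ) * 2 = (((n' + 1) * (n' + 1 - 1) : ℕ) : ℤ) := by
      exact_mod_cast congrArg (Nat.cast : ℕ → ℤ) h2
    have h4 : (((n' + 1) * (n' + 1 - 1) : ℕ) : ℤ) = ((n' + 1 : ℕ) : ℤ) * (((n' + 1 : ℕ) : ℤ) - 1) := by
      push_cast [Nat.add_sub_cancel]
      ring
    linear_combination h3 + h4

lemma even_int_mul_pred (m : ℤ) : ∃ c : ℤ, m * (m - 1) = c + c := by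
  rcases Int.even_or_odd m with h | h
  · obtain ⟨c, hc⟩ := h
    exact ⟨c * (m - 1), by rw [hc]; ring⟩
  · have h1 : Even (m - 1) := Odd.sub_odd h odd_one
    obtain ⟨c, hc⟩ := h1
    exact ⟨m * c, by rw [hc]; ring⟩

variable {q ζ : ℂ} (hq0 : q ≠ 0) (hζ : ζ ≠ 0)

include hq0 hζ in
/-- Per-term identity (L2). -/
lemma term_eq (N j : ℕ) :
    (-1 : ℂ) ^ ((j : ℤ) - N) * q ^ ((((j : ℤ) - N) * (((j : ℤ) - N) - 1)) / 2) * ζ ^ ((j : ℤ) - N) *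
      ((-ζ) ^ N * q ^ (N * (N - 1) / 2) / q ^ (N * N)) =
    q ^ (j * (j - 1) / 2) * (-(ζ / q ^ N)) ^ j := by
  obtain ⟨c, hc⟩ := even_int_mul_pred ((j : ℤ) - N)
  have hdiv : (((j : ℤ) - N) * (((j : ℤ) - N) - 1)) / 2 = c := by omega
  have s1 : ((-1 : ℂ)) ^ ((j : ℤ) - N) * (-1 : ℂ) ^ (N : ℕ) = (-1 : ℂ) ^ (j : ℕ) := by
    rw [← zpow_natCast (-1 : ℂ) N, ← zpow_natCast (-1 : ℂ) j,
      ← zpow_add₀ (by norm_num : (-1 : ℂ) ≠ 0)]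
    congr 1
    omega
  have s2 : ζ ^ ((j : ℤ) - N) * ζ ^ (N : ℕ) = ζ ^ (j : ℕ) := by
    rw [← zpow_natCast ζ N, ← zpow_natCast ζ j, ← zpow_add₀ hζ]
    congr 1
    omega
  have hexp : ((((j : ℤ) - N) * (((j : ℤ) - N) - 1)) / 2) + ((N * (N - 1) / 2 : ℕ) : ℤ)
      + ((N * j : ℕ) : ℤ) = ((j * (j - 1) / 2 : ℕ) : ℤ) + ((N * N : ℕ) : ℤ) := by
    have h1 := two_mul_tri_cast N
    have h2 := two_mul_tri_cast j
    rw [hdiv, Nat.cast_mul, Nat.cast_mul]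
    linarith [hc, h1, h2]
  have s3 : q ^ ((((j : ℤ) - N) * (((j : ℤ) - N) - 1)) / 2) * q ^ (N * (N - 1) / 2 : ℕ)
      * q ^ (N * j : ℕ) = q ^ (j * (j - 1) / 2 : ℕ) * q ^ (N * N : ℕ) := by
    rw [← zpow_natCast q (N * (N - 1) / 2), ← zpow_natCast q (N * j),
      ← zpow_natCast q (j * (j - 1) / 2), ← zpow_natCast q (N * N),
      ← zpow_add₀ hq0, ← zpow_add₀ hq0, ← zpow_add₀ hq0]
    exact congrArg (fun e : ℤ => q ^ e) hexp
  have hrhs : (-(ζ / q ^ N)) ^ j = (-1 : ℂ) ^ j * ζ ^ j / q ^ (N * j) := by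
    rw [neg_pow, div_pow, ← pow_mul]
    ring
  have hneg : (-ζ) ^ N = (-1 : ℂ) ^ N * ζ ^ N := by rw [neg_pow]
  rw [hrhs, hneg, ← mul_div_assoc, ← mul_div_assoc,
    div_eq_div_iff (pow_ne_zero _ hq0) (pow_ne_zero _ hq0)]
  calc (-1:ℂ) ^ ((j:ℤ)-N) * q ^ ((((j:ℤ)-N) * (((j:ℤ)-N)-1))/2) * ζ ^ ((j:ℤ)-N) *
        ((-1:ℂ) ^ N * ζ ^ N * q ^ (N*(N-1)/2 : ℕ)) * q ^ (N*j : ℕ)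
      = ((-1:ℂ) ^ ((j:ℤ)-N) * (-1:ℂ) ^ N) * (ζ ^ ((j:ℤ)-N) * ζ ^ N) *
        (q ^ ((((j:ℤ)-N) * (((j:ℤ)-N)-1))/2) * q ^ (N*(N-1)/2 : ℕ) * q ^ (N*j : ℕ)) := by ring
    _ = (-1:ℂ) ^ j * ζ ^ j * (q ^ (j*(j-1)/2 : ℕ) * q ^ (N*N : ℕ)) := by rw [s1, s2, s3]
    _ = q ^ (j*(j-1)/2 : ℕ) * ((-1:ℂ) ^ j * ζ ^ j) * q ^ (N*N : ℕ) := by ring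

include hq0 hζ in
/-- Product identity (L1). -/
lemma prod_eq (N : ℕ) :
    ∏ k ∈ range (2 * N), (1 + (-(ζ / q ^ N)) * q ^ k) =
      (∏ k ∈ range N, (1 - ζ * q ^ k)) * (∏ k ∈ range N, (1 - (q / ζ) * q ^ k)) *
        ((-ζ) ^ N * q ^ (N * (N - 1) / 2) / q ^ (N * N)) := by
  have h2N : 2 * N = N + N := by omega
  rw [h2N, Finset.prod_range_add]
  have hB : ∀ k ∈ range N, 1 + (-(ζ / q ^ N)) * q ^ (N + k) = 1 - ζ * q ^ k := by
    intro k _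
    rw [pow_add]
    field_simp
    ring
  have hA : ∀ k ∈ range N, 1 + (-(ζ / q ^ N)) * q ^ k
      = (-(ζ * q ^ k) / q ^ N) * (1 - (q / ζ) * q ^ (N - 1 - k)) := by
    intro k hk
    rw [Finset.mem_range] at hk
    have hqk : q ^ k * (q * q ^ (N - 1 - k)) = q ^ N := by
      rw [← pow_succ', ← pow_add]
      congr 1
      omega
    field_simp
    linear_combination (-1 : ℂ) * hqk
  rw [Finset.prod_congr rfl hB, Finset.prod_congr rfl hA, Finset.prod_mul_distrib]
  rw [Finset.prod_range_reflect (fun k => 1 - (q / ζ) * q ^ k) N]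
  have hC : ∏ k ∈ range N, (-(ζ * q ^ k) / q ^ N)
      = (-ζ) ^ N * q ^ (N * (N - 1) / 2) / q ^ (N * N) := by
    rw [Finset.prod_div_distrib, Finset.prod_const, Finset.card_range, ← pow_mul]
    congr 1
    have h : ∀ k, -(ζ * q ^ k) = (-ζ) * q ^ k := fun k => by ring
    simp_rw [h]
    rw [Finset.prod_mul_distrib, Finset.prod_const, Finset.card_range,
      Finset.prod_pow_eq_pow_sum, Finset.sum_range_id]
  rw [hC]
  ring



lemma sum_shift (N : ℕ) (F : ℤ → ℂ) :
    ∑ n ∈ Finset.Icc (-(N : ℤ)) (N : ℤ), F n = ∑ j ∈ Finset.range (2 * N + 1), F ((j : ℤ) - N) := by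
  apply Finset.sum_nbij' (i := fun (n : ℤ) => (n + N).toNat) (j := fun (j : ℕ) => (j : ℤ) - N)
  · intro a ha
    rw [Finset.mem_Icc] at ha
    rw [Finset.mem_range]
    omega
  · intro a ha
    rw [Finset.mem_range] at ha
    rw [Finset.mem_Icc]
    omega
  · intro a ha
    rw [Finset.mem_Icc] at ha
    omega
  · intro a ha
    rw [Finset.mem_range] at ha
    omega
  · intro a ha
    rw [Finset.mem_Icc] at ha
    congr 1
    omega

variable {q ζ : ℂ}

/-- The finite Jacobi triple product identity. -/
lemma finite_jtp (hq : ‖q‖ < 1) (hq0 : q ≠ 0) (hζ : ζ ≠ 0) (N : ℕ) :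
    (∏ k ∈ range N, (1 - ζ * q ^ k)) * (∏ k ∈ range N, (1 - (q / ζ) * q ^ k)) =
      ∑ n ∈ Finset.Icc (-(N : ℤ)) (N : ℤ),
        (-1 : ℂ) ^ n * q ^ ((n * (n - 1)) / 2) * ζ ^ n * bq q (2 * N) ((n + N).toNat) := by
  have hqb := qbinom hq (2 * N) (-(ζ / q ^ N))
  rw [prod_eq hq0 hζ N] at hqb
  set c : ℂ := (-ζ) ^ N * q ^ (N * (N - 1) / 2) / q ^ (N * N) with hcdef
  have hc0 : c ≠ 0 := div_ne_zero
    (mul_ne_zero (pow_ne_zero _ (neg_ne_zero.2 hζ)) (pow_ne_zero _ hq0)) (pow_ne_zero _ hq0)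
  apply mul_right_cancel₀ hc0
  rw [hqb, Finset.sum_mul, sum_shift N
    (fun n => (-1 : ℂ) ^ n * q ^ ((n * (n - 1)) / 2) * ζ ^ n * bq q (2 * N) ((n + N).toNat) * c)]
  symm
  apply Finset.sum_congr rfl
  intro j hj
  have htn : ((j : ℤ) - N + N).toNat = j := by omega
  rw [htn]
  have ht := term_eq hq0 hζ N j
  calc (-1 : ℂ) ^ ((j:ℤ) - N) * q ^ ((((j:ℤ) - N) * (((j:ℤ) - N) - 1)) / 2) * ζ ^ ((j:ℤ) - N)
        * bq q (2 * N) j * c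
      = ((-1 : ℂ) ^ ((j:ℤ) - N) * q ^ ((((j:ℤ) - N) * (((j:ℤ) - N) - 1)) / 2) * ζ ^ ((j:ℤ) - N) * c)
        * bq q (2 * N) j := by ring
    _ = (q ^ (j * (j - 1) / 2) * (-(ζ / q ^ N)) ^ j) * bq q (2 * N) j := by rw [ht]
    _ = q ^ (j * (j - 1) / 2) * bq q (2 * N) j * (-(ζ / q ^ N)) ^ j := by ring


/-! ### Analytic lemmas -/

lemma hasProd_zero_of_exists {f : ℕ → ℂ} {k₀ : ℕ} (h : f k₀ = 0) : HasProd f 0 := by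
  have hev : ∀ᶠ s : Finset ℕ in atTop, (∏ i ∈ s, f i) = 0 := by
    filter_upwards [eventually_ge_atTop ({k₀} : Finset ℕ)] with s hs
    exact Finset.prod_eq_zero (Finset.singleton_subset_iff.mp hs) h
  exact Tendsto.congr' (by filter_upwards [hev] with s hs; exact hs.symm) tendsto_const_nhds

lemma tendsto_prod_one_sub (g : ℕ → ℂ) (hg : Summable g) :
    Tendsto (fun N => ∏ k ∈ Finset.range N, (1 - g k)) atTop (𝓝 (∏' k, (1 - g k))) := by
  by_cases h0 : ∀ k, (1 : ℂ) - g k ≠ 0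
  · have hn : Tendsto (fun n => ‖g n‖) atTop (𝓝 0) := by
      simpa using hg.tendsto_atTop_zero.norm
    have hsmall : ∀ᶠ n in atTop, ‖g n‖ < 1/2 := hn.eventually_lt_const (by norm_num)
    have hlog : Summable (fun n => Complex.log (1 - g n)) := by
      apply Summable.of_norm_bounded_eventually_nat (g := fun n => (3/2) * ‖g n‖) (hg.norm.mul_left _)
      filter_upwards [hsmall] with n hn2
      rw [sub_eq_add_neg]
      calc ‖Complex.log (1 + -g n)‖ ≤ 3/2 * ‖-g n‖ :=
            Complex.norm_log_one_add_half_le_self (by rw [norm_neg]; linarith)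
        _ = 3/2 * ‖g n‖ := by rw [norm_neg]
    have hm : Multipliable (fun k => 1 - g k) :=
      Complex.multipliable_of_summable_log hlog
    exact hm.hasProd.tendsto_prod_nat
  · push_neg at h0
    obtain ⟨k₀, hk⟩ := h0
    have hp : HasProd (fun k => 1 - g k) 0 := hasProd_zero_of_exists hk
    rw [hp.tprod_eq]
    refine Tendsto.congr' ?_ tendsto_const_nhds
    filter_upwards [eventually_gt_atTop k₀] with N hN
    exact (Finset.prod_eq_zero (Finset.mem_range.2 hN) hk).symm

lemma weierstrass_lb (x : ℕ → ℝ) (h0 : ∀ i, 0 ≤ x i) (h1 : ∀ i, x i ≤ 1) (m : ℕ) :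
    1 - ∑ i ∈ range m, x i ≤ ∏ i ∈ range m, (1 - x i) := by
  induction m with
  | zero => simp
  | succ m ih =>
    have hp : (0:ℝ) ≤ ∏ i ∈ range m, (1 - x i) :=
      Finset.prod_nonneg fun i _ => by linarith [h1 i]
    have hS : (0:ℝ) ≤ ∑ i ∈ range m, x i := Finset.sum_nonneg fun i _ => h0 i
    rw [Finset.prod_range_succ, Finset.sum_range_succ]
    nlinarith [h0 m, h1 m]

variable {q : ℂ}

lemma summable_rpow (hq : ‖q‖ < 1) : Summable (fun i : ℕ => ‖q‖ ^ (i + 1)) := by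
  simp_rw [pow_succ']
  exact (summable_geometric_of_lt_one (norm_nonneg q) hq).mul_left _

lemma Pq_lower (hq : ‖q‖ < 1) :
    ∃ c : ℝ, 0 < c ∧ ∀ N, c ≤ ∏ i ∈ range N, (1 - ‖q‖ ^ (i + 1)) := by
  set r := ‖q‖ with hrdef
  have hr0 : 0 ≤ r := norm_nonneg q
  have hr1 : r < 1 := hq
  have hfac : ∀ i : ℕ, 0 < 1 - r ^ (i + 1) := by
    intro i
    have h : r ^ (i + 1) ≤ r ^ 1 := pow_le_pow_of_le_one hr0 hr1.le (by omega)
    simp only [pow_one] at h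
    linarith
  have hfac1 : ∀ i : ℕ, 1 - r ^ (i + 1) ≤ 1 := by
    intro i
    have h : (0:ℝ) ≤ r ^ (i + 1) := pow_nonneg hr0 _
    linarith
  obtain ⟨K, hK⟩ := ((tendsto_pow_atTop_nhds_zero_of_lt_one hr0 hr1).eventually_lt_const
    (by linarith : (0:ℝ) < (1 - r) / 2)).exists
  have htail : ∀ m : ℕ, ∑ i ∈ range m, r ^ (K + i + 1) ≤ 1/2 := by
    intro m
    have h1 : ∑ i ∈ range m, r ^ (K + i + 1) = r ^ (K + 1) * ∑ i ∈ range m, r ^ i := by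
      rw [Finset.mul_sum]
      apply Finset.sum_congr rfl
      intro i _
      rw [← pow_add]
      congr 1
      omega
    have h2 : ∑ i ∈ range m, r ^ i ≤ (1 - r)⁻¹ := by
      calc ∑ i ∈ range m, r ^ i ≤ ∑' i : ℕ, r ^ i :=
            Summable.sum_le_tsum (range m) (fun i _ => pow_nonneg hr0 i)
              (summable_geometric_of_lt_one hr0 hr1)
        _ = (1 - r)⁻¹ := tsum_geometric_of_lt_one hr0 hr1
    have h3 : r ^ (K + 1) ≤ (1 - r) / 2 := by
      rw [pow_succ]
      calc r ^ K * r ≤ r ^ K * 1 := by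
            apply mul_le_mul_of_nonneg_left hr1.le (pow_nonneg hr0 _)
        _ = r ^ K := mul_one _
        _ ≤ (1 - r) / 2 := hK.le
    rw [h1]
    calc r ^ (K + 1) * ∑ i ∈ range m, r ^ i ≤ ((1 - r) / 2) * (1 - r)⁻¹ := by
          apply mul_le_mul h3 h2 (Finset.sum_nonneg fun i _ => pow_nonneg hr0 i) (by linarith)
      _ = 1/2 := by
          rw [div_mul_eq_mul_div, mul_comm, inv_mul_cancel₀ (by linarith : (1 - r) ≠ 0)]
  have hprodK : (0:ℝ) < ∏ i ∈ range K, (1 - r ^ (i + 1)) :=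
    Finset.prod_pos fun i _ => hfac i
  refine ⟨(∏ i ∈ range K, (1 - r ^ (i + 1))) * (1/2), by positivity, fun N => ?_⟩
  rcases le_or_gt N K with hNK | hKN
  · have hsplit : ∏ i ∈ range K, (1 - r ^ (i + 1))
        = (∏ i ∈ range N, (1 - r ^ (i + 1))) * ∏ i ∈ range (K - N), (1 - r ^ (N + i + 1)) := by
      have hK' : N + (K - N) = K := by omega
      conv_lhs => rw [← hK', Finset.prod_range_add]
    have h2 : ∏ i ∈ range (K - N), (1 - r ^ (N + i + 1)) ≤ 1 := by
      apply Finset.prod_le_one (fun i _ => ?_) (fun i _ => ?_)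
      · have h := pow_le_pow_of_le_one hr0 hr1.le (show (i+1) ≤ N + i + 1 by omega)
        linarith [hfac i, (le_of_lt (hfac i))]
      · have h : (0:ℝ) ≤ r ^ (N + i + 1) := pow_nonneg hr0 _
        linarith
    have hN0 : (0:ℝ) < ∏ i ∈ range N, (1 - r ^ (i + 1)) := Finset.prod_pos fun i _ => hfac i
    calc (∏ i ∈ range K, (1 - r ^ (i + 1))) * (1/2)
        ≤ (∏ i ∈ range K, (1 - r ^ (i + 1))) * 1 := by
          apply mul_le_mul_of_nonneg_left (by norm_num) hprodK.le
      _ = ∏ i ∈ range K, (1 - r ^ (i + 1)) := mul_one _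
      _ = (∏ i ∈ range N, (1 - r ^ (i + 1))) * ∏ i ∈ range (K - N), (1 - r ^ (N + i + 1)) :=
          hsplit
      _ ≤ (∏ i ∈ range N, (1 - r ^ (i + 1))) * 1 := by
          apply mul_le_mul_of_nonneg_left h2 hN0.le
      _ = ∏ i ∈ range N, (1 - r ^ (i + 1)) := mul_one _
  · have hsplit : ∏ i ∈ range N, (1 - r ^ (i + 1))
        = (∏ i ∈ range K, (1 - r ^ (i + 1))) * ∏ i ∈ range (N - K), (1 - r ^ (K + i + 1)) := by
      have hN' : K + (N - K) = N := by omega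
      conv_lhs => rw [← hN', Finset.prod_range_add]
    have h2 : (1:ℝ)/2 ≤ ∏ i ∈ range (N - K), (1 - r ^ (K + i + 1)) := by
      have hw := weierstrass_lb (fun i => r ^ (K + i + 1))
        (fun i => pow_nonneg hr0 _)
        (fun i => by
          have h := pow_le_pow_of_le_one hr0 hr1.le (show 1 ≤ K + i + 1 by omega)
          simp only [pow_one] at h
          linarith) (N - K)
      have ht := htail (N - K)
      linarith
    rw [hsplit]
    apply mul_le_mul_of_nonneg_left h2 hprodK.le

lemma norm_Pq_ge (hq : ‖q‖ < 1) (N : ℕ) :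
    ∏ i ∈ range N, (1 - ‖q‖ ^ (i + 1)) ≤ ‖Pq q N‖ := by
  rw [Pq, norm_prod]
  apply Finset.prod_le_prod
  · intro i _
    have h : ‖q‖ ^ (i + 1) ≤ ‖q‖ ^ 1 := pow_le_pow_of_le_one (norm_nonneg q) hq.le (by omega)
    simp only [pow_one] at h
    linarith
  · intro i _
    calc 1 - ‖q‖ ^ (i + 1) = ‖(1:ℂ)‖ - ‖q ^ (i + 1)‖ := by simp [norm_pow]
      _ ≤ ‖1 - q ^ (i + 1)‖ := norm_sub_norm_le _ _

lemma bq_bound (hq : ‖q‖ < 1) : ∃ C : ℝ, 0 < C ∧ ∀ M j, ‖bq q M j‖ ≤ C := by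
  obtain ⟨c, hc0, hc⟩ := Pq_lower hq
  refine ⟨Real.exp (∑' i : ℕ, ‖q‖ ^ (i + 1)) / c, by positivity, fun M j => ?_⟩
  by_cases hj : j ≤ M
  · have hsplit : Pq q M = Pq q (M - j) * ∏ i ∈ range j, (1 - q ^ ((M - j) + i + 1)) := by
      have hMj : (M - j) + j = M := by omega
      conv_lhs => rw [Pq, ← hMj, Finset.prod_range_add]
      rfl
    have hbq : bq q M j = (∏ i ∈ range j, (1 - q ^ ((M - j) + i + 1))) / Pq q j := by
      rw [bq, if_pos hj, hsplit]
      rw [mul_comm (Pq q j) (Pq q (M - j)), mul_div_mul_left _ _ (Pq_ne_zero hq (M - j))]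
    rw [hbq, norm_div]
    have hnum : ‖∏ i ∈ range j, (1 - q ^ ((M - j) + i + 1))‖
        ≤ Real.exp (∑' i : ℕ, ‖q‖ ^ (i + 1)) := by
      rw [norm_prod]
      calc ∏ i ∈ range j, ‖1 - q ^ ((M - j) + i + 1)‖
          ≤ ∏ i ∈ range j, Real.exp (‖q‖ ^ (i + 1)) := by
            apply Finset.prod_le_prod (fun i _ => norm_nonneg _) (fun i _ => ?_)
            calc ‖1 - q ^ ((M - j) + i + 1)‖ ≤ ‖(1:ℂ)‖ + ‖q ^ ((M - j) + i + 1)‖ :=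
                  norm_sub_le _ _
              _ = 1 + ‖q‖ ^ ((M - j) + i + 1) := by simp [norm_pow]
              _ ≤ 1 + ‖q‖ ^ (i + 1) := by
                  have h := pow_le_pow_of_le_one (norm_nonneg q) hq.le
                    (show i + 1 ≤ (M - j) + i + 1 by omega)
                  linarith
              _ ≤ Real.exp (‖q‖ ^ (i + 1)) := by
                  have h := Real.add_one_le_exp (‖q‖ ^ (i + 1))
                  linarith
        _ = Real.exp (∑ i ∈ range j, ‖q‖ ^ (i + 1)) := (Real.exp_sum _ _).symm
        _ ≤ Real.exp (∑' i : ℕ, ‖q‖ ^ (i + 1)) := by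
            apply Real.exp_le_exp.2
            exact Summable.sum_le_tsum (range j) (fun i _ => pow_nonneg (norm_nonneg q) _)
              (summable_rpow hq)
    have hden : c ≤ ‖Pq q j‖ := le_trans (hc j) (norm_Pq_ge hq j)
    exact div_le_div₀ (Real.exp_nonneg _) hnum hc0 hden
  · rw [bq_of_gt (by omega)]
    simp only [norm_zero]
    positivity

lemma tendsto_Pq (hq : ‖q‖ < 1) :
    Tendsto (fun N => Pq q N) atTop (𝓝 (∏' k : ℕ, (1 - q ^ (k + 1)))) := by
  have hg : Summable (fun k : ℕ => q ^ (k + 1)) := by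
    apply Summable.of_norm
    simpa [norm_pow] using summable_rpow hq
  simpa [Pq] using tendsto_prod_one_sub (fun k => q ^ (k + 1)) hg

lemma tprod_Pq_ne_zero (hq : ‖q‖ < 1) : (∏' k : ℕ, (1 - q ^ (k + 1))) ≠ 0 := by
  obtain ⟨c, hc0, hc⟩ := Pq_lower hq
  have hnorm : c ≤ ‖∏' k : ℕ, (1 - q ^ (k + 1))‖ := by
    apply ge_of_tendsto (tendsto_Pq hq).norm
    filter_upwards with N
    exact le_trans (hc N) (norm_Pq_ge hq N)
  intro h
  rw [h] at hnorm
  simp only [norm_zero] at hnorm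
  linarith

lemma bq_tendsto (hq : ‖q‖ < 1) (n : ℤ) :
    Tendsto (fun N : ℕ => bq q (2 * N) ((n + N).toNat)) atTop
      (𝓝 (∏' k : ℕ, (1 - q ^ (k + 1)))⁻¹) := by
  have hPP0 : (∏' k : ℕ, (1 - q ^ (k + 1))) ≠ 0 := tprod_Pq_ne_zero hq
  have h2 : Tendsto (fun N : ℕ => 2 * N) atTop atTop :=
    tendsto_atTop_atTop.mpr fun b => ⟨b, fun a ha => by omega⟩
  have hA : Tendsto (fun N : ℕ => (n + N).toNat) atTop atTop :=
    tendsto_atTop_atTop.mpr fun b => ⟨b + n.natAbs, fun a ha => by omega⟩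
  have hB : Tendsto (fun N : ℕ => 2 * N - (n + N).toNat) atTop atTop :=
    tendsto_atTop_atTop.mpr fun b => ⟨b + n.natAbs, fun a ha => by omega⟩
  have key : Tendsto (fun N : ℕ =>
        Pq q (2 * N) / (Pq q ((n + N).toNat) * Pq q (2 * N - (n + N).toNat)))
      atTop (𝓝 ((∏' k : ℕ, (1 - q ^ (k + 1))) /
        ((∏' k : ℕ, (1 - q ^ (k + 1))) * (∏' k : ℕ, (1 - q ^ (k + 1)))))) :=
    Tendsto.div ((tendsto_Pq hq).comp h2)
      (((tendsto_Pq hq).comp hA).mul ((tendsto_Pq hq).comp hB)) (mul_ne_zero hPP0 hPP0)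
  have heq : (∏' k : ℕ, (1 - q ^ (k + 1))) /
      ((∏' k : ℕ, (1 - q ^ (k + 1))) * (∏' k : ℕ, (1 - q ^ (k + 1))))
      = (∏' k : ℕ, (1 - q ^ (k + 1)))⁻¹ := by
    field_simp
  rw [← heq]
  refine Tendsto.congr' ?_ key
  filter_upwards [eventually_ge_atTop n.natAbs] with N hN
  rw [bq, if_pos (by omega)]

/-! ### Summability of the theta series -/

lemma zexp_natCast (n : ℕ) :
    (((n : ℤ) * ((n : ℤ) - 1)) / 2) = ((n * (n - 1) / 2 : ℕ) : ℤ) := by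
  have h1 := two_mul_tri_cast n
  omega

lemma zexp_negCast (n : ℕ) :
    (((-(n : ℤ)) * ((-(n : ℤ)) - 1)) / 2) = (((n + 1) * n / 2 : ℕ) : ℤ) := by
  have h1 := two_mul_tri_cast (n + 1)
  have h0 : (n + 1) * ((n + 1) - 1) = (n + 1) * n := by simp
  rw [h0] at h1
  have h5 : ((n + 1 : ℕ) : ℤ) = (n : ℤ) + 1 := by push_cast; ring
  rw [h5] at h1
  have h4 : ((n : ℤ) + 1) * (((n : ℤ) + 1) - 1) = (-(n : ℤ)) * ((-(n : ℤ)) - 1) := by ring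
  rw [h4] at h1
  omega

variable {ζ : ℂ}

lemma norm_term (n : ℤ) :
    ‖(-1 : ℂ) ^ n * q ^ ((n * (n - 1)) / 2) * ζ ^ n‖ = ‖q‖ ^ ((n * (n - 1)) / 2) * ‖ζ‖ ^ n := by
  rw [norm_mul, norm_mul, norm_zpow, norm_zpow, norm_zpow]
  simp

lemma summable_norm_theta (hq : ‖q‖ < 1) (hq0 : q ≠ 0) (hζ : ζ ≠ 0) :
    Summable (fun n : ℤ => ‖(-1 : ℂ) ^ n * q ^ ((n * (n - 1)) / 2) * ζ ^ n‖) := by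
  have hr0 : 0 < ‖q‖ := norm_pos_iff.mpr hq0
  have hz0 : 0 < ‖ζ‖ := norm_pos_iff.mpr hζ
  have hvalp : ∀ n : ℕ, ‖(-1 : ℂ) ^ (n : ℤ) * q ^ (((n : ℤ) * ((n : ℤ) - 1)) / 2) * ζ ^ (n : ℤ)‖
      = ‖q‖ ^ (n * (n - 1) / 2 : ℕ) * ‖ζ‖ ^ n := by
    intro n
    rw [norm_term, zexp_natCast n, zpow_natCast, zpow_natCast]
  have hvaln : ∀ n : ℕ, ‖(-1 : ℂ) ^ (-(n : ℤ)) * q ^ ((-(n : ℤ) * (-(n : ℤ) - 1)) / 2)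
      * ζ ^ (-(n : ℤ))‖ = ‖q‖ ^ ((n + 1) * n / 2 : ℕ) * (‖ζ‖⁻¹) ^ n := by
    intro n
    rw [norm_term, zexp_negCast n, zpow_natCast, zpow_neg, zpow_natCast, inv_pow]
  apply Summable.of_nat_of_neg
  · apply summable_of_ratio_test_tendsto_lt_one zero_lt_one
    · filter_upwards with n
      rw [hvalp n]
      positivity
    · have hratio : ∀ n : ℕ,
          ‖‖(-1 : ℂ) ^ ((n + 1 : ℕ) : ℤ) * q ^ ((((n + 1 : ℕ) : ℤ) * (((n + 1 : ℕ) : ℤ) - 1)) / 2)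
            * ζ ^ ((n + 1 : ℕ) : ℤ)‖‖
          / ‖‖(-1 : ℂ) ^ (n : ℤ) * q ^ (((n : ℤ) * ((n : ℤ) - 1)) / 2) * ζ ^ (n : ℤ)‖‖
          = ‖q‖ ^ n * ‖ζ‖ := by
        intro n
        rw [Real.norm_of_nonneg (norm_nonneg _), Real.norm_of_nonneg (norm_nonneg _),
          hvalp, hvalp, tri_succ n, pow_add, pow_succ]
        rw [div_eq_iff (ne_of_gt (by positivity))]
        ring
      refine Tendsto.congr (fun n => (hratio n).symm) ?_
      have := (tendsto_pow_atTop_nhds_zero_of_lt_one (norm_nonneg q) hq).mul_const ‖ζ‖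
      simpa using this
  · apply summable_of_ratio_test_tendsto_lt_one zero_lt_one
    · filter_upwards with n
      rw [hvaln n]
      positivity
    · have hratio : ∀ n : ℕ,
          ‖‖(-1 : ℂ) ^ (-((n + 1 : ℕ) : ℤ)) * q ^ ((-((n + 1 : ℕ) : ℤ) * (-((n + 1 : ℕ) : ℤ) - 1)) / 2)
            * ζ ^ (-((n + 1 : ℕ) : ℤ))‖‖
          / ‖‖(-1 : ℂ) ^ (-(n : ℤ)) * q ^ ((-(n : ℤ) * (-(n : ℤ) - 1)) / 2) * ζ ^ (-(n : ℤ))‖‖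
          = ‖q‖ ^ n * (‖q‖ * ‖ζ‖⁻¹) := by
        intro n
        rw [Real.norm_of_nonneg (norm_nonneg _), Real.norm_of_nonneg (norm_nonneg _),
          hvaln, hvaln]
        have htri : (n + 1 + 1) * (n + 1) / 2 = (n + 1) * n / 2 + (n + 1) := by
          have h := tri_succ (n + 1)
          simpa using h
        rw [htri, pow_add, pow_succ]
        rw [div_eq_iff (ne_of_gt (by positivity))]
        ring
      refine Tendsto.congr (fun n => (hratio n).symm) ?_
      have := (tendsto_pow_atTop_nhds_zero_of_lt_one (norm_nonneg q) hq).mul_const (‖q‖ * ‖ζ‖⁻¹)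
      simpa using this

/-! ### Main theorem, nonzero case -/

lemma jtp_ne_zero (hq : ‖q‖ < 1) (hq0 : q ≠ 0) (hζ : ζ ≠ 0) :
    ∑' n : ℤ, (-1 : ℂ) ^ n * q ^ ((n * (n - 1)) / 2) * ζ ^ n =
      (∏' k : ℕ, (1 - q ^ (k + 1))) * (∏' k : ℕ, (1 - ζ * q ^ k)) *
        ∏' k : ℕ, (1 - (q / ζ) * q ^ k) := by
  set a : ℤ → ℂ := fun n => (-1 : ℂ) ^ n * q ^ ((n * (n - 1)) / 2) * ζ ^ n with ha
  obtain ⟨C, hC0, hC⟩ := bq_bound hq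
  have hsn : Summable (fun n : ℤ => ‖a n‖) := summable_norm_theta hq hq0 hζ
  have hPP0 : (∏' k : ℕ, (1 - q ^ (k + 1))) ≠ 0 := tprod_Pq_ne_zero hq
  set g : ℕ → ℤ → ℂ := fun N n =>
    if n ∈ Finset.Icc (-(N : ℤ)) (N : ℤ) then a n * bq q (2 * N) ((n + N).toNat) else 0 with hg
  -- each tsum of g N equals the finite products
  have hGN : ∀ N : ℕ, (∑' n : ℤ, g N n) =
      (∏ k ∈ range N, (1 - ζ * q ^ k)) * (∏ k ∈ range N, (1 - (q / ζ) * q ^ k)) := by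
    intro N
    rw [tsum_eq_sum (s := Finset.Icc (-(N : ℤ)) (N : ℤ)) (fun b hb => by rw [hg]; simp [hb])]
    rw [finite_jtp hq hq0 hζ N]
    apply Finset.sum_congr rfl
    intro n hn
    rw [hg]
    simp only [if_pos hn]
    rfl
  -- dominated convergence
  have hlim : Tendsto (fun N => ∑' n : ℤ, g N n) atTop
      (𝓝 (∑' n : ℤ, a n * (∏' k : ℕ, (1 - q ^ (k + 1)))⁻¹)) := by
    apply tendsto_tsum_of_dominated_convergence (bound := fun n => C * ‖a n‖) (hsn.mul_left C)
    · intro n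
      have hev : ∀ᶠ N : ℕ in atTop, a n * bq q (2 * N) ((n + N).toNat) = g N n := by
        filter_upwards [eventually_ge_atTop n.natAbs] with N hN
        have hmem : n ∈ Finset.Icc (-(N : ℤ)) (N : ℤ) := Finset.mem_Icc.mpr (by omega)
        rw [hg]
        simp only [if_pos hmem]
      exact Tendsto.congr' hev ((bq_tendsto hq n).const_mul (a n))
    · filter_upwards with N n
      rw [hg]
      by_cases hmem : n ∈ Finset.Icc (-(N : ℤ)) (N : ℤ)
      · simp only [if_pos hmem]
        rw [norm_mul, mul_comm C ‖a n‖]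
        exact mul_le_mul_of_nonneg_left (hC _ _) (norm_nonneg _)
      · simp only [if_neg hmem, norm_zero]
        positivity
  -- limit of the products
  have hlim2 : Tendsto (fun N => (∏ k ∈ range N, (1 - ζ * q ^ k)) *
      (∏ k ∈ range N, (1 - (q / ζ) * q ^ k))) atTop
      (𝓝 ((∏' k : ℕ, (1 - ζ * q ^ k)) * ∏' k : ℕ, (1 - (q / ζ) * q ^ k))) := by
    apply Tendsto.mul
    · exact tendsto_prod_one_sub (fun k => ζ * q ^ k)
        ((summable_geometric_of_norm_lt_one hq).mul_left ζ)
    · exact tendsto_prod_one_sub (fun k => (q / ζ) * q ^ k)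
        ((summable_geometric_of_norm_lt_one hq).mul_left (q / ζ))
  have hlim' : Tendsto (fun N => ∑' n : ℤ, g N n) atTop
      (𝓝 ((∏' k : ℕ, (1 - ζ * q ^ k)) * ∏' k : ℕ, (1 - (q / ζ) * q ^ k))) := by
    refine Tendsto.congr (fun N => (hGN N).symm) hlim2
  have huniq := tendsto_nhds_unique hlim hlim'
  -- huniq : ∑' n, a n * Π⁻¹ = Π₂ * Π₃
  rw [tsum_mul_right] at huniq
  have h3 := congrArg (fun x : ℂ => x * (∏' k : ℕ, (1 - q ^ (k + 1)))) huniq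
  simp only [mul_assoc, inv_mul_cancel₀ hPP0, mul_one] at h3
  rw [h3]
  ring

end JTP

/-- Jacobi's triple product identity. -/
theorem jacobi_triple_product (q ζ : ℂ) (hq : ‖q‖ < 1) (hζ : ζ ≠ 0) :
    ∑' n : ℤ, (-1 : ℂ) ^ n * q ^ ((n * (n - 1)) / 2) * ζ ^ n =
      (∏' k : ℕ, (1 - q ^ (k + 1))) * (∏' k : ℕ, (1 - ζ * q ^ k)) *
        ∏' k : ℕ, (1 - (q / ζ) * q ^ k) := by
  by_cases hq0 : q = 0
  · subst hq0
    have hLHS : ∑' n : ℤ, (-1 : ℂ) ^ n * (0 : ℂ) ^ ((n * (n - 1)) / 2) * ζ ^ n = 1 - ζ := by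
      rw [tsum_eq_sum (s := ({0, 1} : Finset ℤ)) ?_]
      · rw [Finset.sum_pair (by norm_num : (0 : ℤ) ≠ 1)]
        norm_num
        ring
      · intro n hn
        simp only [Finset.mem_insert, Finset.mem_singleton] at hn
        push_neg at hn
        obtain ⟨h0, h1⟩ := hn
        have h2 : 2 ≤ n * (n - 1) := by
          rcases lt_or_ge n 0 with h | h
          · nlinarith
          · have h4 : 2 ≤ n := by omega
            nlinarith
        have h3 : (n * (n - 1)) / 2 ≠ 0 := by omega
        rw [zero_zpow _ h3]
        ring
    rw [hLHS]
    have h1 : (∏' k : ℕ, (1 - (0 : ℂ) ^ (k + 1))) = 1 := by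
      have he : (fun k : ℕ => 1 - (0 : ℂ) ^ (k + 1)) = fun _ => 1 := by
        funext k
        simp
      rw [he, tprod_one]
    have h2 : (∏' k : ℕ, (1 - ζ * (0 : ℂ) ^ k)) = 1 - ζ := by
      rw [tprod_eq_mulSingle 0 ?_]
      · simp
      · intro k hk
        rw [zero_pow hk]
        ring
    have h3 : (∏' k : ℕ, (1 - ((0 : ℂ) / ζ) * (0 : ℂ) ^ k)) = 1 := by
      have he : (fun k : ℕ => 1 - ((0 : ℂ) / ζ) * (0 : ℂ) ^ k) = fun _ => 1 := by
        funext k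
        simp
      rw [he, tprod_one]
    rw [h1, h2, h3]
    ring
  · exact JTP.jtp_ne_zero hq hq0 hζ
end

section
/- For $|q|<1$, Euler's pentagonal number theorem holds in the form $(q;q)_\infty = \sum_{b\in\mathbb{Z}} (-1)^b q^{(3b^2-b)/2} = -\sum_{b\geq 0}(-1)^b q^{\frac{3}{2}b^2+\frac{5}{2}b+1} + \sum_{b\geq 0}(-1)^b q^{\frac{3}{2}b^2+\frac{1}{2}b}$. -/
set_option maxHeartbeats 1000000

open Finset Filter Topology

/-- Shanks summand for the finite pentagonal number identity. -/
noncomputable def pentT (q : ℂ) (n j : ℕ) : ℂ :=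
  (-1) ^ j * q ^ (j * (j + 1) / 2 + j * n) * ∏ k ∈ Icc (j + 1) n, (1 - q ^ k)

/-- Pentagonal summand (pair of pentagonal terms). -/
noncomputable def pentG (q : ℂ) (b : ℕ) : ℂ :=
  -((-1 : ℂ) ^ b * q ^ ((3 * b ^ 2 + 5 * b) / 2 + 1)) + (-1 : ℂ) ^ b * q ^ ((3 * b ^ 2 + b) / 2)

lemma pent_tri_even (j : ℕ) : j * (j + 1) % 2 = 0 :=
  Nat.even_iff.mp (Nat.even_mul_succ_self j)

lemma pent_tri_succ (j : ℕ) : (j + 1) * (j + 2) / 2 = j * (j + 1) / 2 + (j + 1) := by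
  have h1 : (j + 1) * (j + 2) = j * (j + 1) + 2 * (j + 1) := by ring
  have h2 := pent_tri_even j
  omega

lemma pent_e_top (n : ℕ) : n * (n + 1) / 2 + n * n = (3 * n ^ 2 + n) / 2 := by
  have h1 : 3 * n ^ 2 + n = n * (n + 1) + 2 * (n * n) := by ring
  have h2 := pent_tri_even n
  omega

lemma pent_e_top' (n : ℕ) : (n + 1) * (n + 2) / 2 + (n + 1) * n = (3 * n ^ 2 + 5 * n) / 2 + 1 := by
  have h1 : (n + 1) * (n + 2) = n * (n + 1) + 2 * (n + 1) := by ring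
  have h2 : 3 * n ^ 2 + 5 * n = n * (n + 1) + 2 * (n * n + 2 * n) := by ring
  have h3 := pent_tri_even n
  have h4 : (n + 1) * n = n * n + n := by ring
  omega

/-- Shanks' finite form of the pentagonal number theorem. -/
lemma pent_shanks (q : ℂ) : ∀ n, ∑ j ∈ range n, pentT q n j = ∑ b ∈ range n, pentG q b := by
  intro n
  induction n with
  | zero => simp
  | succ n ih =>
    set P : ℕ → ℂ := fun j => ∏ k ∈ Icc (j + 1) n, (1 - q ^ k) with hP
    set c : ℕ → ℂ := fun j => (-1) ^ j * q ^ (j * (j + 1) / 2 + j * n + j) * P j with hc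
    set D : ℕ → ℂ := fun j => (-1) ^ j * q ^ ((j + 1) * (j + 2) / 2 + (j + 1) * n) * P j with hD
    have key : ∀ j ∈ range (n + 1), pentT q (n + 1) j = c j - D j := by
      intro j hj
      have hjn : j ≤ n := by simpa using Nat.lt_succ_iff.mp (mem_range.mp hj)
      have hprod : ∏ k ∈ Icc (j + 1) (n + 1), (1 - q ^ k)
          = (∏ k ∈ Icc (j + 1) n, (1 - q ^ k)) * (1 - q ^ (n + 1)) :=
        Finset.prod_Icc_succ_top (by omega) _
      have hexp : j * (j + 1) / 2 + j * (n + 1) = j * (j + 1) / 2 + j * n + j := by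
        have : j * (n + 1) = j * n + j := by ring
        omega
      have hexp2 : (j * (j + 1) / 2 + j * n + j) + (n + 1)
          = (j + 1) * (j + 2) / 2 + (j + 1) * n := by
        have h1 := pent_tri_succ j
        have h2 : (j + 1) * n = j * n + n := by ring
        omega
      simp only [pentT, hc, hD]
      rw [hprod, hexp, ← hexp2, pow_add]
      ring
    have key2 : ∀ j ∈ range n, c (j + 1) = pentT q n (j + 1) + D j := by
      intro j hj
      have hjn : j + 1 ≤ n := mem_range.mp hj
      have hsplit : P j = (1 - q ^ (j + 1)) * ∏ k ∈ Icc (j + 2) n, (1 - q ^ k) := by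
        rw [hP]
        simp only
        rw [← Finset.Ico_add_one_right_eq_Icc, ← Finset.Ico_add_one_right_eq_Icc,
          Finset.prod_eq_prod_Ico_succ_bot (by omega)]
      have hexp : (j + 1) * (j + 2) / 2 + (j + 1) * n + (j + 1)
          = ((j + 1) * (j + 2) / 2 + (j + 1) * n) + (j + 1) := rfl
      simp only [hc, hD, pentT]
      rw [hsplit, hexp, pow_add, pow_succ]
      ring
    have hc0 : c 0 = pentT q n 0 := by
      rw [hc, pentT]; norm_num; rfl
    calc ∑ j ∈ range (n + 1), pentT q (n + 1) j
        = ∑ j ∈ range (n + 1), (c j - D j) := Finset.sum_congr rfl key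
      _ = ∑ j ∈ range (n + 1), c j - ∑ j ∈ range (n + 1), D j := Finset.sum_sub_distrib _ _
      _ = (c 0 + ∑ j ∈ range n, c (j + 1)) - (∑ j ∈ range n, D j + D n) := by
          rw [Finset.sum_range_succ' c n, Finset.sum_range_succ D n]; ring
      _ = (pentT q n 0 + ∑ j ∈ range n, (pentT q n (j + 1) + D j))
            - (∑ j ∈ range n, D j + D n) := by
          rw [hc0, Finset.sum_congr rfl key2]
      _ = (pentT q n 0 + ∑ j ∈ range n, pentT q n (j + 1)) - D n := by
          rw [Finset.sum_add_distrib]; ring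
      _ = ∑ j ∈ range (n + 1), pentT q n j - D n := by
          rw [Finset.sum_range_succ' (pentT q n) n]; ring
      _ = ∑ j ∈ range n, pentT q n j + (pentT q n n - D n) := by
          rw [Finset.sum_range_succ]; ring
      _ = ∑ b ∈ range (n + 1), pentG q b := by
          have hT : pentT q n n = (-1 : ℂ) ^ n * q ^ ((3 * n ^ 2 + n) / 2) := by
            rw [pentT, Finset.Icc_eq_empty (by omega), Finset.prod_empty, mul_one, pent_e_top]
          have hDn : D n = (-1 : ℂ) ^ n * q ^ ((3 * n ^ 2 + 5 * n) / 2 + 1) := by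
            simp only [hD, hP]
            rw [Finset.Icc_eq_empty (by omega), Finset.prod_empty, mul_one, pent_e_top']
          rw [Finset.sum_range_succ, ih, hT, hDn, pentG]
          ring

lemma pent_prod_norm_le (q : ℂ) (hq : ‖q‖ < 1) (m n : ℕ) :
    ‖∏ k ∈ Icc m n, (1 - q ^ k)‖ ≤ Real.exp (1 - ‖q‖)⁻¹ := by
  have h0 : (0:ℝ) ≤ ‖q‖ := norm_nonneg q
  calc ‖∏ k ∈ Icc m n, (1 - q ^ k)‖ ≤ ∏ k ∈ Icc m n, ‖1 - q ^ k‖ := norm_prod_le _ _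
    _ ≤ ∏ k ∈ Icc m n, Real.exp (‖q‖ ^ k) := by
        refine Finset.prod_le_prod (fun _ _ => norm_nonneg _) (fun k _ => ?_)
        calc ‖1 - q ^ k‖ ≤ ‖(1:ℂ)‖ + ‖q ^ k‖ := norm_sub_le _ _
          _ = 1 + ‖q‖ ^ k := by rw [norm_one, norm_pow]
          _ ≤ Real.exp (‖q‖ ^ k) := by linarith [Real.add_one_le_exp (‖q‖ ^ k)]
    _ = Real.exp (∑ k ∈ Icc m n, ‖q‖ ^ k) := (Real.exp_sum _ _).symm
    _ ≤ Real.exp (1 - ‖q‖)⁻¹ := by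
        refine Real.exp_le_exp.2 ?_
        calc ∑ k ∈ Icc m n, ‖q‖ ^ k ≤ ∑' k : ℕ, ‖q‖ ^ k :=
              (summable_geometric_of_lt_one h0 hq).sum_le_tsum _ (fun _ _ => pow_nonneg h0 _)
          _ = (1 - ‖q‖)⁻¹ := tsum_geometric_of_lt_one h0 hq

lemma pent_multipliable (q : ℂ) (hq : ‖q‖ < 1) :
    Multipliable (fun k : ℕ => 1 - q ^ (k + 1)) := by
  have h0 : (0:ℝ) ≤ ‖q‖ := norm_nonneg q
  have hne : ∀ (x : Unit) (k : ℕ), (fun k (_ : Unit) => 1 - q ^ (k + 1)) k x ≠ 0 := by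
    intro _ k
    have hlt : ‖q ^ (k + 1)‖ < 1 := by
      rw [norm_pow]; exact pow_lt_one₀ h0 hq k.succ_ne_zero
    simp only
    intro h
    rw [sub_eq_zero] at h
    rw [← h] at hlt
    simp at hlt
  have hlog : ∀ (_ : Unit), Summable fun k : ℕ => Complex.log (1 - q ^ (k + 1)) := by
    intro _
    refine Summable.of_norm_bounded_eventually_nat
      ((summable_geometric_of_lt_one h0 hq).mul_left (3 / 2)) ?_
    have hev : ∀ᶠ k : ℕ in atTop, ‖q‖ ^ (k + 1) ≤ 1 / 2 := by
      have h2 := (tendsto_pow_atTop_nhds_zero_of_lt_one h0 hq).eventually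
        (eventually_le_nhds (by norm_num : (0:ℝ) < 1 / 2))
      obtain ⟨N, hN⟩ := eventually_atTop.mp h2
      exact eventually_atTop.mpr ⟨N, fun k hk => hN _ (by omega)⟩
    filter_upwards [hev] with k hk
    have h1 : ‖Complex.log (1 - q ^ (k + 1))‖ ≤ 3 / 2 * ‖q‖ ^ (k + 1) := by
      rw [sub_eq_add_neg]
      have := Complex.norm_log_one_add_half_le_self
        (z := -q ^ (k + 1)) (by rwa [norm_neg, norm_pow])
      rwa [norm_neg, norm_pow] at this
    refine h1.trans ?_
    have : ‖q‖ ^ (k + 1) ≤ ‖q‖ ^ k := pow_le_pow_of_le_one h0 hq.le (by omega)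
    linarith
  exact Complex.multipliable_of_summable_log (hlog ())

lemma pent_summable (q : ℂ) (hq : ‖q‖ < 1) (c : ℕ → ℕ) (hc : ∀ b, b ≤ c b) :
    Summable (fun b : ℕ => (-1 : ℂ) ^ b * q ^ (c b)) := by
  refine Summable.of_norm_bounded (summable_geometric_of_lt_one (norm_nonneg q) hq) (fun b => ?_)
  rw [norm_mul, norm_pow, norm_neg, norm_one, one_pow, one_mul, norm_pow]
  exact pow_le_pow_of_le_one (norm_nonneg q) hq.le (hc b)

lemma pent_err_bound (q : ℂ) (hq : ‖q‖ < 1) (C : ℝ)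
    (hC : ∀ m n : ℕ, ‖∏ k ∈ Icc m n, (1 - q ^ k)‖ ≤ C) (hC0 : 0 ≤ C) (n : ℕ) :
    ‖∑ j ∈ Ico 1 n, pentT q n j‖ ≤ C * (1 - ‖q‖)⁻¹ * ‖q‖ ^ n := by
  have h0 : (0:ℝ) ≤ ‖q‖ := norm_nonneg q
  rw [Finset.sum_Ico_eq_sum_range]
  calc ‖∑ i ∈ range (n - 1), pentT q n (1 + i)‖
      ≤ ∑ i ∈ range (n - 1), ‖pentT q n (1 + i)‖ := norm_sum_le _ _
    _ ≤ ∑ i ∈ range (n - 1), C * ‖q‖ ^ n * ‖q‖ ^ i := by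
        refine Finset.sum_le_sum (fun i hi => ?_)
        have hn1 : 1 ≤ n := by
          have := mem_range.mp hi; omega
        rw [pentT, norm_mul, norm_mul, norm_pow, norm_neg, norm_one, one_pow, one_mul, norm_pow]
        have hexp : n + i ≤ (1 + i) * (1 + i + 1) / 2 + (1 + i) * n := by
          have h1 : (1 + i) * n = n + i * n := by ring
          have h2 : i ≤ i * n := Nat.le_mul_of_pos_right i (by omega)
          omega
        have hpow : ‖q‖ ^ ((1 + i) * (1 + i + 1) / 2 + (1 + i) * n) ≤ ‖q‖ ^ (n + i) :=
          pow_le_pow_of_le_one h0 hq.le hexp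
        calc ‖q‖ ^ ((1 + i) * (1 + i + 1) / 2 + (1 + i) * n)
              * ‖∏ k ∈ Icc (1 + i + 1) n, (1 - q ^ k)‖
            ≤ ‖q‖ ^ (n + i) * C :=
              mul_le_mul hpow (hC _ _) (norm_nonneg _) (pow_nonneg h0 _)
          _ = C * ‖q‖ ^ n * ‖q‖ ^ i := by rw [pow_add]; ring
    _ = C * ‖q‖ ^ n * ∑ i ∈ range (n - 1), ‖q‖ ^ i := by rw [Finset.mul_sum]
    _ ≤ C * (1 - ‖q‖)⁻¹ * ‖q‖ ^ n := by
        have hsum : ∑ i ∈ range (n - 1), ‖q‖ ^ i ≤ (1 - ‖q‖)⁻¹ := by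
          calc ∑ i ∈ range (n - 1), ‖q‖ ^ i ≤ ∑' i : ℕ, ‖q‖ ^ i :=
                (summable_geometric_of_lt_one h0 hq).sum_le_tsum _ (fun _ _ => pow_nonneg h0 _)
            _ = (1 - ‖q‖)⁻¹ := tsum_geometric_of_lt_one h0 hq
        calc C * ‖q‖ ^ n * ∑ i ∈ range (n - 1), ‖q‖ ^ i
            ≤ C * ‖q‖ ^ n * (1 - ‖q‖)⁻¹ :=
              mul_le_mul_of_nonneg_left hsum (mul_nonneg hC0 (pow_nonneg h0 n))
          _ = C * (1 - ‖q‖)⁻¹ * ‖q‖ ^ n := by ring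

lemma pent_reindex (q : ℂ) (n : ℕ) :
    ∏ k ∈ range n, (1 - q ^ (k + 1)) = ∏ k ∈ Icc 1 n, (1 - q ^ k) := by
  rw [← Finset.Ico_add_one_right_eq_Icc, Finset.prod_Ico_eq_prod_range]
  simp [add_comm]

lemma pent_int_pos (q : ℂ) (n : ℕ) :
    (-1 : ℂ) ^ ((n : ℤ) + 1) * q ^ ((3 * ((n : ℤ) + 1) ^ 2 - ((n : ℤ) + 1)) / 2) =
      -((-1 : ℂ) ^ n * q ^ ((3 * n ^ 2 + 5 * n) / 2 + 1)) := by
  have heven : (3 * n ^ 2 + 5 * n) % 2 = 0 := by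
    have h1 : 3 * n ^ 2 + 5 * n = n * (n + 1) + 2 * (n * n + 2 * n) := by ring
    have h2 := pent_tri_even n
    omega
  have hnat : 2 * ((3 * n ^ 2 + 5 * n) / 2 + 1) = 3 * n ^ 2 + 5 * n + 2 := by omega
  have hint : (3 * ((n : ℤ) + 1) ^ 2 - ((n : ℤ) + 1))
      = 2 * (((3 * n ^ 2 + 5 * n) / 2 + 1 : ℕ) : ℤ) := by
    push_cast
    push_cast at hnat
    linarith [hnat]
  rw [hint, Int.mul_ediv_cancel_left _ (by norm_num), zpow_natCast,
    show ((n : ℤ) + 1) = ((n + 1 : ℕ) : ℤ) by push_cast; ring, zpow_natCast, pow_succ]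
  ring

lemma pent_int_neg (q : ℂ) (n : ℕ) :
    (-1 : ℂ) ^ (-((n : ℤ) + 1)) * q ^ ((3 * (-((n : ℤ) + 1)) ^ 2 - (-((n : ℤ) + 1))) / 2) =
      (-1 : ℂ) ^ (n + 1) * q ^ ((3 * (n + 1) ^ 2 + (n + 1)) / 2) := by
  have heven : (3 * (n + 1) ^ 2 + (n + 1)) % 2 = 0 := by
    have h1 : 3 * (n + 1) ^ 2 + (n + 1) = (n + 1) * (n + 1 + 1) + 2 * ((n + 1) * (n + 1)) := by
      ring
    have h2 := pent_tri_even (n + 1)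
    omega
  have hnat : 2 * ((3 * (n + 1) ^ 2 + (n + 1)) / 2) = 3 * (n + 1) ^ 2 + (n + 1) := by omega
  have hint : (3 * (-((n : ℤ) + 1)) ^ 2 - (-((n : ℤ) + 1)))
      = 2 * (((3 * (n + 1) ^ 2 + (n + 1)) / 2 : ℕ) : ℤ) := by
    push_cast
    push_cast at hnat
    linarith [hnat]
  rw [hint, Int.mul_ediv_cancel_left _ (by norm_num), zpow_natCast]
  congr 1
  rw [zpow_neg, show ((n : ℤ) + 1) = ((n + 1 : ℕ) : ℤ) by push_cast; ring, zpow_natCast]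
  rw [← inv_pow, inv_neg, inv_one]

/-- Euler's pentagonal number theorem, in bilateral and split forms. -/
theorem pentagonal_number_theorem (q : ℂ) (hq : ‖q‖ < 1) :
    (∏' k : ℕ, (1 - q ^ (k + 1))) = ∑' b : ℤ, (-1 : ℂ) ^ b * q ^ ((3 * b ^ 2 - b) / 2) ∧
    (∏' k : ℕ, (1 - q ^ (k + 1))) =
      -(∑' b : ℕ, (-1 : ℂ) ^ b * q ^ ((3 * b ^ 2 + 5 * b) / 2 + 1)) +
        ∑' b : ℕ, (-1 : ℂ) ^ b * q ^ ((3 * b ^ 2 + b) / 2) := by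
  have h0 : (0:ℝ) ≤ ‖q‖ := norm_nonneg q
  -- summability of the two split series
  have hs1 : Summable (fun b : ℕ => (-1 : ℂ) ^ b * q ^ ((3 * b ^ 2 + 5 * b) / 2 + 1)) := by
    refine pent_summable q hq _ (fun b => ?_)
    have : b ≤ b ^ 2 := Nat.le_self_pow (by norm_num) b
    omega
  have hs2 : Summable (fun b : ℕ => (-1 : ℂ) ^ b * q ^ ((3 * b ^ 2 + b) / 2)) := by
    refine pent_summable q hq _ (fun b => ?_)
    have : b ≤ b ^ 2 := Nat.le_self_pow (by norm_num) b
    omega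
  set S1 : ℂ := ∑' b : ℕ, (-1 : ℂ) ^ b * q ^ ((3 * b ^ 2 + 5 * b) / 2 + 1) with hS1
  set S2 : ℂ := ∑' b : ℕ, (-1 : ℂ) ^ b * q ^ ((3 * b ^ 2 + b) / 2) with hS2
  have hg : HasSum (pentG q) (-S1 + S2) := hs1.hasSum.neg.add hs2.hasSum
  have htg : Tendsto (fun n => ∑ b ∈ range n, pentG q b) atTop (𝓝 (-S1 + S2)) :=
    hg.tendsto_sum_nat
  have hmult := pent_multipliable q hq
  have htp : Tendsto (fun n => ∏ k ∈ range n, (1 - q ^ (k + 1))) atTop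
      (𝓝 (∏' k : ℕ, (1 - q ^ (k + 1)))) := hmult.hasProd.tendsto_prod_nat
  -- the error tends to zero
  have herr : Tendsto
      (fun n => ∑ b ∈ range n, pentG q b - ∏ k ∈ range n, (1 - q ^ (k + 1))) atTop (𝓝 0) := by
    set C : ℝ := Real.exp (1 - ‖q‖)⁻¹ with hCdef
    have hC0 : (0:ℝ) ≤ C := (Real.exp_pos _).le
    have hb : ∀ᶠ n in atTop, ‖∑ b ∈ range n, pentG q b - ∏ k ∈ range n, (1 - q ^ (k + 1))‖
        ≤ C * (1 - ‖q‖)⁻¹ * ‖q‖ ^ n := by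
      filter_upwards [eventually_ge_atTop 1] with n hn
      have heq : ∑ b ∈ range n, pentG q b - ∏ k ∈ range n, (1 - q ^ (k + 1))
          = ∑ j ∈ Ico 1 n, pentT q n j := by
        have ht0 : pentT q n 0 = ∏ k ∈ Icc 1 n, (1 - q ^ k) := by
          rw [pentT]; norm_num
        rw [pent_reindex, ← pent_shanks, Finset.range_eq_Ico,
          Finset.sum_eq_sum_Ico_succ_bot (by omega), ht0]
        ring
      rw [heq]
      exact pent_err_bound q hq C (pent_prod_norm_le q hq) hC0 n
    have hlim : Tendsto (fun n : ℕ => C * (1 - ‖q‖)⁻¹ * ‖q‖ ^ n) atTop (𝓝 0) := by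
      have := (tendsto_pow_atTop_nhds_zero_of_lt_one h0 hq).const_mul (C * (1 - ‖q‖)⁻¹)
      simpa using this
    exact squeeze_zero_norm' hb hlim
  have htp' : Tendsto (fun n => ∑ b ∈ range n, pentG q b) atTop
      (𝓝 (∏' k : ℕ, (1 - q ^ (k + 1)))) := by
    have := herr.add htp
    simp only [sub_add_cancel, zero_add] at this
    exact this
  have hsecond : (∏' k : ℕ, (1 - q ^ (k + 1))) = -S1 + S2 := tendsto_nhds_unique htp' htg
  refine ⟨?_, hsecond⟩
  -- bilateral form
  have hpos : HasSum (fun n : ℕ => (-1 : ℂ) ^ ((n : ℤ) + 1)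
      * q ^ ((3 * ((n : ℤ) + 1) ^ 2 - ((n : ℤ) + 1)) / 2)) (-S1) := by
    have heq : (fun n : ℕ => (-1 : ℂ) ^ ((n : ℤ) + 1)
        * q ^ ((3 * ((n : ℤ) + 1) ^ 2 - ((n : ℤ) + 1)) / 2))
        = fun n : ℕ => -((-1 : ℂ) ^ n * q ^ ((3 * n ^ 2 + 5 * n) / 2 + 1)) :=
      funext fun n => pent_int_pos q n
    rw [heq]
    exact hs1.hasSum.neg
  have hneg : HasSum (fun n : ℕ => (-1 : ℂ) ^ (-((n : ℤ) + 1))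
      * q ^ ((3 * (-((n : ℤ) + 1)) ^ 2 - (-((n : ℤ) + 1))) / 2)) (S2 - 1) := by
    have heq : (fun n : ℕ => (-1 : ℂ) ^ (-((n : ℤ) + 1))
        * q ^ ((3 * (-((n : ℤ) + 1)) ^ 2 - (-((n : ℤ) + 1))) / 2))
        = fun n : ℕ => (-1 : ℂ) ^ (n + 1) * q ^ ((3 * (n + 1) ^ 2 + (n + 1)) / 2) :=
      funext fun n => pent_int_neg q n
    rw [heq]
    have h20 : (S2 - 1) + ∑ i ∈ range 1, ((-1 : ℂ) ^ i * q ^ ((3 * i ^ 2 + i) / 2)) = S2 := by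
      norm_num
    exact (hasSum_nat_add_iff 1).2 (by rw [h20]; exact hs2.hasSum)
  have hbil : HasSum (fun b : ℤ => (-1 : ℂ) ^ b * q ^ ((3 * b ^ 2 - b) / 2))
      (-S1 + ((-1 : ℂ) ^ (0:ℤ) * q ^ ((3 * (0:ℤ) ^ 2 - 0) / 2)) + (S2 - 1)) :=
    HasSum.of_add_one_of_neg_add_one hpos hneg
  have hzero : ((-1 : ℂ) ^ (0:ℤ) * q ^ ((3 * (0:ℤ) ^ 2 - 0) / 2)) = 1 := by norm_num
  rw [hbil.tsum_eq, hzero, hsecond]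
  ring
end

section
/- For any positive integers $m$ and $p$, the identity $\frac{1}{m^p} = \sum_{s_p > s_{p-1} > \cdots > s_1 > 0} \frac{1}{s_p s_{p-1}\cdots s_1}\cdot\frac{s_p!\,m!}{(s_p+m)!}$ holds, where the sum is over all strictly decreasing tuples of positive integers. -/
open Nat Filter

noncomputable def bb (m n : ℕ) : ℝ := (n ! : ℝ) * (m !) / ((m : ℝ) * ((n + m)! : ℕ))

lemma bb_nonneg (m n : ℕ) : 0 ≤ bb m n := by
  unfold bb; positivity

lemma bb_tendsto (m : ℕ) (hm : 1 ≤ m) : Tendsto (bb m) atTop (nhds 0) := by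
  have h1 : Tendsto (fun n : ℕ => ((m ! : ℝ)) / (n + 1)) atTop (nhds 0) := by
    have := (tendsto_const_div_atTop_nhds_zero_nat (m ! : ℝ)).comp (tendsto_add_atTop_nat 1)
    simp only [Function.comp_def, Nat.cast_add, Nat.cast_one] at this
    exact this
  refine squeeze_zero (fun n => bb_nonneg m n) (fun n => ?_) h1
  unfold bb
  rw [div_le_div_iff₀ (by positivity) (by positivity)]
  have h2 : (n + 1) * n ! ≤ m * (n + m)! := by
    calc (n+1) * n ! = (n+1)! := (Nat.factorial_succ n).symm
    _ ≤ (n + m)! := Nat.factorial_le (by omega)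
    _ ≤ m * (n + m)! := Nat.le_mul_of_pos_left _ hm
  calc (n ! : ℝ) * ↑m ! * (↑n + 1) = (m !) * (((n+1) * n ! : ℕ)) := by push_cast; ring
  _ ≤ (m !) * ((m * (n + m)! : ℕ)) := by exact_mod_cast Nat.mul_le_mul_left (m !) h2
  _ = ↑m ! * (↑m * ↑(n + m)!) := by push_cast; ring

noncomputable def term (m n : ℕ) : ℝ :=
  (1 / (n : ℝ)) * (((n ! * m ! : ℕ) : ℝ) / (((n + m)! : ℕ) : ℝ))

lemma term_nonneg (m n : ℕ) : 0 ≤ term m n := by unfold term; positivity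

lemma bb_sub (m : ℕ) (hm : 1 ≤ m) (n : ℕ) :
    bb m n - bb m (n + 1) = ((n !  * m ! : ℕ) : ℝ) / (((n + 1 + m)! : ℕ) : ℝ) := by
  unfold bb
  have h1 : ((n+1+m)! : ℕ) = (n + 1 + m) * (n+m)! := by
    rw [show n+1+m = (n+m)+1 by ring, Nat.factorial_succ]
  have h2 : ((n+1)! : ℕ) = (n+1) * n ! := Nat.factorial_succ n
  have hm' : (0:ℝ) < (m : ℝ) := by exact_mod_cast hm
  have hf : (0:ℝ) < (((n+m)! : ℕ) : ℝ) := by exact_mod_cast Nat.factorial_pos _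
  rw [h1, h2]
  push_cast
  field_simp
  ring

lemma term_succ (m : ℕ) (hm : 1 ≤ m) (j : ℕ) : term m (j+1) = bb m j - bb m (j+1) := by
  rw [bb_sub m hm j]
  unfold term
  have hj : (0:ℝ) < ((j:ℝ)+1) := by positivity
  have hf : (0:ℝ) < (((j+1+m)! : ℕ) : ℝ) := by exact_mod_cast Nat.factorial_pos _
  rw [Nat.factorial_succ]
  push_cast
  field_simp

def eqk (k : ℕ) : ℕ ≃ {n : ℕ // k < n} where
  toFun j := ⟨k + 1 + j, by omega⟩
  invFun n := n.1 - (k + 1)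
  left_inv j := by simp
  right_inv n := by ext; have := n.2; simp; omega

lemma hasSum_tail (m : ℕ) (hm : 1 ≤ m) (k : ℕ) :
    HasSum (fun n : {n : ℕ // k < n} => term m n.1) (bb m k) := by
  rw [← (eqk k).hasSum_iff]
  have heq : (fun n : {n : ℕ // k < n} => term m n.1) ∘ (eqk k)
      = fun j : ℕ => bb m (k + j) - bb m (k + j + 1) := by
    funext j
    simp only [Function.comp, eqk, Equiv.coe_fn_mk]
    rw [show k + 1 + j = (k + j) + 1 by ring, term_succ m hm]
  rw [heq, hasSum_iff_tendsto_nat_of_nonneg]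
  · have hps : ∀ N, ∑ j ∈ Finset.range N, (bb m (k + j) - bb m (k + j + 1))
        = bb m k - bb m (k + N) := by
      intro N
      exact Finset.sum_range_sub' (fun j => bb m (k + j)) N
    simp only [hps]
    have : Filter.Tendsto (fun N : ℕ => bb m (k + N)) Filter.atTop (nhds 0) := by
      have := (bb_tendsto m hm).comp (Filter.tendsto_add_atTop_nat k)
      simpa [Function.comp_def, add_comm] using this
    simpa using Filter.Tendsto.sub (tendsto_const_nhds) this
  · intro j
    have := term_nonneg m (k + j + 1)
    rw [show k + j + 1 = (k+j) + 1 by ring, term_succ m hm] at this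
    exact this

lemma bb_eq (m : ℕ) (hm : 1 ≤ m) (k : ℕ) :
    bb m k = (1 / (m : ℝ)) * (((k ! * m ! : ℕ) : ℝ) / (((k + m)! : ℕ) : ℝ)) := by
  unfold bb
  push_cast
  ring

abbrev Idx (p : ℕ) := {s : Fin p → ℕ // StrictMono s ∧ ∀ i, 0 < s i}

noncomputable def FF (m p : ℕ) (s : Fin (p+1) → ℕ) : ℝ :=
  (∏ i : Fin (p+1), (1 : ℝ) / (s i : ℝ)) *
    ((((s (Fin.last p))! * m ! : ℕ) : ℝ) / (((s (Fin.last p) + m)! : ℕ) : ℝ))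

lemma FF_nonneg (m p : ℕ) (s : Fin (p+1) → ℕ) : 0 ≤ FF m p s := by
  unfold FF; positivity

def eqOne : Idx 1 ≃ {n : ℕ // 0 < n} where
  toFun s := ⟨s.1 0, s.2.2 0⟩
  invFun n := ⟨fun _ => n.1, ⟨Subsingleton.strictMono _, fun _ => n.2⟩⟩
  left_inv s := Subtype.ext (funext fun i => by rw [Subsingleton.elim i 0])
  right_inv n := rfl

lemma hasSum_base (m : ℕ) (hm : 1 ≤ m) :
    HasSum (fun s : Idx 1 => FF m 0 s.1) (1 / (m : ℝ)) := by
  rw [← eqOne.symm.hasSum_iff]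
  have heq : (fun s : Idx 1 => FF m 0 s.1) ∘ eqOne.symm = fun n : {n : ℕ // 0 < n} => term m n.1 := by
    funext n
    show FF m 0 (fun _ => n.1) = term m n.1
    unfold FF term
    rw [Fin.prod_univ_one]
  rw [heq]
  have h := hasSum_tail m hm 0
  have hb : bb m 0 = 1 / (m : ℝ) := by
    unfold bb
    have h1 : ((m ! : ℕ) : ℝ) ≠ 0 := by exact_mod_cast Nat.factorial_ne_zero m
    have h2 : (m : ℝ) ≠ 0 := by positivity
    simp only [Nat.zero_add, Nat.factorial_zero, Nat.cast_one, one_mul]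
    field_simp
  rwa [hb] at h

lemma snoc_strictMono {q : ℕ} (t : Fin (q+1) → ℕ) (ht : StrictMono t) (n : ℕ)
    (hn : t (Fin.last q) < n) : StrictMono (Fin.snoc t n : Fin (q+2) → ℕ) := by
  rw [Fin.strictMono_iff_lt_succ]
  intro i
  induction i using Fin.lastCases with
  | last =>
    rw [Fin.succ_last]
    simp only [Fin.snoc_castSucc, Fin.snoc_last]
    exact hn
  | cast j =>
    rw [Fin.succ_castSucc]
    simp only [Fin.snoc_castSucc]
    exact ht Fin.castSucc_lt_succ

def stepEquiv (q : ℕ) : Idx (q+2) ≃ {x : Idx (q+1) × ℕ // x.1.1 (Fin.last q) < x.2} where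
  toFun s := ⟨(⟨Fin.init s.1, (fun i j hij => s.2.1 (Fin.strictMono_castSucc hij)),
      fun i => s.2.2 _⟩, s.1 (Fin.last (q+1))), s.2.1 (Fin.castSucc_lt_last _)⟩
  invFun x := ⟨Fin.snoc x.1.1.1 x.1.2,
    snoc_strictMono _ x.1.1.2.1 _ x.2,
    fun i => by
      induction i using Fin.lastCases with
      | last =>
        rw [Fin.snoc_last]
        exact lt_trans (x.1.1.2.2 (Fin.last q)) x.2
      | cast j =>
        rw [Fin.snoc_castSucc]
        exact x.1.1.2.2 j⟩
  left_inv s := Subtype.ext (Fin.snoc_init_self s.1)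
  right_inv x := by
    apply Subtype.ext
    apply Prod.ext
    · apply Subtype.ext
      dsimp only
      exact Fin.init_snoc _ _
    · dsimp only
      exact Fin.snoc_last _ _

lemma hasSum_step (m : ℕ) (hm : 1 ≤ m) (q : ℕ) (a : ℝ)
    (IH : HasSum (fun t : Idx (q+1) => FF m q t.1) a) :
    HasSum (fun s : Idx (q+2) => FF m (q+1) s.1) (1 / (m : ℝ) * a) := by
  set E := (stepEquiv q).trans
    (Equiv.subtypeProdEquivSigmaSubtype fun (t : Idx (q+1)) (n : ℕ) => t.1 (Fin.last q) < n) with hE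
  rw [← E.symm.hasSum_iff]
  set g := (fun s : Idx (q+2) => FF m (q+1) s.1) ∘ E.symm with hg
  have hgval : ∀ (t : Idx (q+1)) (n : {n : ℕ // t.1 (Fin.last q) < n}),
      g ⟨t, n⟩ = (∏ i : Fin (q+1), (1:ℝ) / (t.1 i : ℝ)) * term m n.1 := by
    intro t n
    show FF m (q+1) (Fin.snoc t.1 n.1) = _
    unfold FF term
    rw [Fin.prod_univ_castSucc]
    simp only [Fin.snoc_castSucc, Fin.snoc_last]
    ring
  have hfib : ∀ t : Idx (q+1),
      HasSum (fun n : {n : ℕ // t.1 (Fin.last q) < n} => g ⟨t, n⟩)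
        (1 / (m : ℝ) * FF m q t.1) := by
    intro t
    have h := (hasSum_tail m hm (t.1 (Fin.last q))).mul_left
      (∏ i : Fin (q+1), (1:ℝ) / (t.1 i : ℝ))
    rw [bb_eq m hm] at h
    simp only [hgval]
    convert h using 1
    · rfl
    unfold FF
    ring
  have hnn : ∀ x, 0 ≤ g x := fun x => FF_nonneg m (q+1) _
  have hsummable : Summable g := by
    rw [summable_sigma_of_nonneg hnn]
    exact ⟨fun t => (hfib t).summable,
      (IH.summable.mul_left (1 / (m:ℝ))).congr fun t => ((hfib t).tsum_eq).symm⟩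
  exact HasSum.sigma_of_hasSum (IH.mul_left (1 / (m:ℝ))) hfib hsummable

lemma hasSum_key (m : ℕ) (hm : 1 ≤ m) : ∀ q : ℕ,
    HasSum (fun s : Idx (q+1) => FF m q s.1) (1 / (m : ℝ) ^ (q+1))
  | 0 => by simpa using hasSum_base m hm
  | q+1 => by
    have h := hasSum_step m hm q _ (hasSum_key m hm q)
    have : (1:ℝ) / (m:ℝ) * (1 / (m:ℝ) ^ (q+1)) = 1 / (m:ℝ) ^ (q+2) := by
      have hm' : (m:ℝ) ≠ 0 := by exact_mod_cast Nat.one_le_iff_ne_zero.mp hm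
      field_simp
      ring
    rwa [this] at h

open Nat in
/-- `1/m^p = ∑_{s_p > ⋯ > s_1 > 0} (1/(s_p⋯s_1)) · s_p! m!/(s_p+m)!`. -/
theorem inverse_power_as_multiple_sum (m p : ℕ) (hm : 1 ≤ m) (hp : 1 ≤ p) :
    (1 : ℝ) / (m : ℝ) ^ p =
      ∑' s : {s : Fin p → ℕ // StrictMono s ∧ ∀ i, 0 < s i},
        (∏ i : Fin p, (1 : ℝ) / (s.1 i : ℝ)) *
          ((((s.1 ⟨p - 1, by omega⟩)! * m ! : ℕ) : ℝ) /
            (((s.1 ⟨p - 1, by omega⟩ + m)! : ℕ) : ℝ)) := by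
  obtain ⟨q, rfl⟩ : ∃ q, p = q + 1 := ⟨p - 1, by omega⟩
  exact ((hasSum_key m hm q).tsum_eq).symm
end

section
/- Let $M > 0$ and $N > 0$ be positive integers and $\mu \in \{0,1,\ldots,M-1\}$ with $2\mu \not\equiv 0 \pmod{M}$. Define $\psi_{M,\mu}(n) = \varepsilon$ if $n \equiv \varepsilon\mu \pmod M$ for $\varepsilon \in \{\pm 1\}$ and $\psi_{M,\mu}(n)=0$ otherwise. Then $\lim_{t\to 0^+} \sum_{n=1}^\infty \psi_{M,\mu}(n)\, e^{\pi i n^2/(MN)}\, e^{-\pi n^2 t/M} = -\frac{1}{2MN}\sum_{n=1}^{2MN} n\,\psi_{M,\mu}(n)\, e^{\pi i n^2/(MN)}$. -/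
open Filter Finset

private lemma abel_id (b : ℕ → ℂ) (h : ℕ → ℂ) (N : ℕ) :
    ∑ n ∈ range N, (∑ k ∈ range (n+1), b k) * (h n - h (n+1)) =
      ∑ n ∈ range (N+1), b n * h n - (∑ k ∈ range (N+1), b k) * h N := by
  induction N with
  | zero => simp [mul_comm]
  | succ N ih =>
      rw [sum_range_succ, ih, sum_range_succ (n := N+1), sum_range_succ (f := b) (n := N+1)]
      ring

private lemma weighted_sum_id (a : ℕ → ℂ) (m : ℕ) :
    ∑ N ∈ range m, (∑ n ∈ range (N+1), a n) =
      ∑ n ∈ range m, ((m : ℂ) - n) * a n := by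
  induction m with
  | zero => simp
  | succ m ih =>
      rw [sum_range_succ, ih]
      have : ∑ n ∈ range (m+1), (((m+1 : ℕ) : ℂ) - n) * a n
          = ∑ n ∈ range (m+1), (((m:ℂ) - n) * a n + a n) := by
        apply sum_congr rfl; intro n _; push_cast; ring
      rw [this, sum_add_distrib, sum_range_succ (fun n => ((m:ℂ) - n) * a n)]
      simp

private lemma abel_tsum (b : ℕ → ℂ) (h : ℕ → ℂ)
    (h1 : Summable (fun n => b n * h n))
    (h2 : Summable (fun n => (∑ k ∈ range (n+1), b k) * (h n - h (n+1))))
    (h3 : Tendsto (fun N => (∑ k ∈ range (N+1), b k) * h N) atTop (nhds 0)) :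
    ∑' n, (∑ k ∈ range (n+1), b k) * (h n - h (n+1)) = ∑' n, b n * h n := by
  have t2 : Tendsto (fun N => ∑ n ∈ range N,
      (∑ k ∈ range (n+1), b k) * (h n - h (n+1))) atTop
      (nhds (∑' n, b n * h n)) := by
    have : (fun N => ∑ n ∈ range N, (∑ k ∈ range (n+1), b k) * (h n - h (n+1)))
        = fun N => (∑ n ∈ range (N+1), b n * h n) - (∑ k ∈ range (N+1), b k) * h N := by
      funext N; exact abel_id b h N
    rw [this]
    have l1 : Tendsto (fun N => ∑ n ∈ range (N+1), b n * h n) atTop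
        (nhds (∑' n, b n * h n)) :=
      (h1.hasSum.tendsto_sum_nat).comp (tendsto_add_atTop_nat 1)
    simpa using l1.sub h3
  exact tendsto_nhds_unique (h2.hasSum.tendsto_sum_nat) t2

private lemma periodic_sum_shift (f : ℕ → ℂ) (P : ℕ)
    (hper : ∀ n, f (n + P) = f n) (hmean : ∑ n ∈ range P, f n = 0) :
    ∀ N, ∑ n ∈ range (N + P), f n = ∑ n ∈ range N, f n := by
  intro N
  induction N with
  | zero => simpa using hmean
  | succ N ih =>
      have : N + 1 + P = (N + P) + 1 := by omega
      rw [this, sum_range_succ, ih, hper, sum_range_succ]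

private lemma periodic_psum_bound (f : ℕ → ℂ) (P : ℕ) (hP : 0 < P)
    (hper : ∀ n, f (n + P) = f n) (hmean : ∑ n ∈ range P, f n = 0) :
    ∀ N, ‖∑ n ∈ range N, f n‖ ≤ ∑ n ∈ range P, ‖f n‖ := by
  intro N
  induction N using Nat.strong_induction_on with
  | _ N ih =>
    by_cases hN : N < P
    · calc ‖∑ n ∈ range N, f n‖ ≤ ∑ n ∈ range N, ‖f n‖ := norm_sum_le _ _
        _ ≤ ∑ n ∈ range P, ‖f n‖ := by
            apply sum_le_sum_of_subset_of_nonneg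
            · exact range_subset_range.2 hN.le
            · intro i _ _; exact norm_nonneg _
    · push_neg at hN
      have hNP : N = (N - P) + P := by omega
      rw [hNP, periodic_sum_shift f P hper hmean]
      exact ih (N - P) (by omega)

private lemma gauss_summable {s : ℝ} (hs : 0 < s) :
    Summable (fun n : ℕ => Real.exp (-(s * ((n : ℝ) + 1) ^ 2))) := by
  apply Summable.of_nonneg_of_le (g := fun n : ℕ => Real.exp (-(s * ((n : ℝ) + 1) ^ 2)))
    (fun n => (Real.exp_pos _).le) (f := fun n : ℕ => Real.exp (-s) ^ (n + 1))
  · intro n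
    rw [← Real.exp_nat_mul]
    apply Real.exp_le_exp.2
    have h1 : (0 : ℝ) ≤ (n : ℝ) := Nat.cast_nonneg n
    push_cast
    nlinarith [sq_nonneg ((n:ℝ))]
  · exact (summable_geometric_of_lt_one (Real.exp_pos _).le
      (Real.exp_lt_one_iff.2 (by linarith))).comp_injective (add_left_injective 1)

set_option maxHeartbeats 1000000 in
private lemma gauss_bound {s : ℝ} (hs : 0 < s) (hs1 : s ≤ 1) :
    (∑' n : ℕ, Real.exp (-(s * ((n : ℝ) + 1) ^ 2))) ≤ 4 / Real.sqrt s + 1 := by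
  have hrs : 0 < Real.sqrt s := Real.sqrt_pos.2 hs
  have hrs1 : Real.sqrt s ≤ 1 := by
    rw [show (1:ℝ) = Real.sqrt 1 by simp]; exact Real.sqrt_le_sqrt hs1
  obtain ⟨m₀, hm₀, hm₀'⟩ : ∃ m : ℕ, 1 / Real.sqrt s ≤ (m : ℝ) ∧ (m : ℝ) ≤ 1 / Real.sqrt s + 1 :=
    ⟨⌈1 / Real.sqrt s⌉₊, Nat.le_ceil _, (Nat.ceil_lt_add_one (by positivity)).le⟩
  have hsum := gauss_summable hs
  rw [← Summable.sum_add_tsum_nat_add m₀ hsum]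
  have first : ∑ n ∈ range m₀, Real.exp (-(s * ((n : ℝ) + 1) ^ 2)) ≤ (m₀ : ℝ) := by
    calc ∑ n ∈ range m₀, Real.exp (-(s * ((n : ℝ) + 1) ^ 2))
        ≤ ∑ _n ∈ range m₀, (1:ℝ) := by
          apply sum_le_sum; intro i _
          have : (0:ℝ) ≤ s * ((i : ℝ) + 1) ^ 2 := by positivity
          exact Real.exp_le_one_iff.2 (by linarith)
      _ = (m₀ : ℝ) := by simp
  have hsm₀ : Real.sqrt s ≤ s * (m₀ : ℝ) := by
    have h := mul_le_mul_of_nonneg_left hm₀ hs.le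
    have heq : s * (1 / Real.sqrt s) = Real.sqrt s := by
      rw [mul_one_div, Real.div_sqrt]
    linarith
  set r : ℝ := Real.exp (-Real.sqrt s) with hrdef
  have hr0 : 0 < r := Real.exp_pos _
  have hr1 : r < 1 := Real.exp_lt_one_iff.2 (by linarith)
  have second : (∑' k : ℕ, Real.exp (-(s * (((k + m₀ : ℕ) : ℝ) + 1) ^ 2)))
      ≤ 3 / Real.sqrt s := by
    have hterm : ∀ k : ℕ, Real.exp (-(s * (((k + m₀ : ℕ) : ℝ) + 1) ^ 2)) ≤ r ^ (k+1) := by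
      intro k
      rw [hrdef, ← Real.exp_nat_mul]
      apply Real.exp_le_exp.2
      have h1 : (m₀ : ℝ) ≤ ((k + m₀ : ℕ) : ℝ) + 1 := by push_cast; linarith [Nat.cast_nonneg (α := ℝ) k]
      have h2 : ((k:ℝ) + 1) ≤ ((k + m₀ : ℕ) : ℝ) + 1 := by push_cast; linarith [Nat.cast_nonneg (α := ℝ) m₀]
      have h3 : Real.sqrt s * ((k:ℝ)+1) ≤ s * (((k + m₀ : ℕ) : ℝ) + 1) ^ 2 := by
        have hk1 : (0:ℝ) ≤ (k:ℝ) + 1 := by positivity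
        have : Real.sqrt s * ((k:ℝ)+1) ≤ (s * m₀) * ((k:ℝ)+1) :=
          mul_le_mul_of_nonneg_right hsm₀ hk1
        calc Real.sqrt s * ((k:ℝ)+1) ≤ (s * m₀) * ((k:ℝ)+1) := this
          _ ≤ s * ((((k + m₀ : ℕ) : ℝ) + 1) * ((((k + m₀ : ℕ) : ℝ) + 1))) := by
              have := mul_le_mul h1 h2 hk1 (le_trans (Nat.cast_nonneg m₀) h1)
              nlinarith
          _ = s * (((k + m₀ : ℕ) : ℝ) + 1) ^ 2 := by ring
      push_cast at h3 ⊢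
      linarith
    have hgeo : Summable (fun k : ℕ => r ^ (k+1)) :=
      (summable_geometric_of_lt_one hr0.le hr1).comp_injective (add_left_injective 1)
    calc (∑' k : ℕ, Real.exp (-(s * (((k + m₀ : ℕ) : ℝ) + 1) ^ 2)))
        ≤ ∑' k : ℕ, r ^ (k+1) := by
          exact Summable.tsum_le_tsum hterm ((summable_nat_add_iff m₀).2 hsum) hgeo
      _ = ∑' k : ℕ, r * r ^ k := by simp [pow_succ, mul_comm]
      _ = r * (1 - r)⁻¹ := by rw [tsum_mul_left, tsum_geometric_of_lt_one hr0.le hr1]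
      _ ≤ 3 / Real.sqrt s := by
          have h1r : Real.sqrt s / 3 ≤ 1 - r := by
            have : Real.sqrt s * r ≤ 1 - r := by
              have := Real.add_one_le_exp (Real.sqrt s)
              have he : Real.exp (Real.sqrt s) * r = 1 := by
                rw [hrdef, ← Real.exp_add]; simp
              nlinarith [hr0.le]
            have hr3 : (1:ℝ)/3 ≤ r := by
              have h2 : Real.exp (-(1:ℝ)) ≤ r := Real.exp_le_exp.2 (neg_le_neg hrs1)
              have h3 : Real.exp 1 ≤ 3 := le_of_lt (lt_trans Real.exp_one_lt_d9 (by norm_num))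
              have h4 : Real.exp 1 * Real.exp (-(1:ℝ)) = 1 := by
                rw [← Real.exp_add]; simp
              nlinarith [Real.exp_pos (1:ℝ), Real.exp_pos (-(1:ℝ))]
            nlinarith
          have h0 : 0 < 1 - r := by nlinarith
          have h0' : (0:ℝ) < Real.sqrt s / 3 := by positivity
          have hi : (1-r)⁻¹ ≤ (Real.sqrt s / 3)⁻¹ := by
            apply inv_anti₀ h0' h1r
          rw [inv_div] at hi
          nlinarith [inv_pos.2 h0]
  calc ∑ n ∈ range m₀, Real.exp (-(s * ((n : ℝ) + 1) ^ 2))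
        + (∑' k : ℕ, Real.exp (-(s * (((k + m₀ : ℕ) : ℝ) + 1) ^ 2)))
      ≤ (m₀ : ℝ) + 3 / Real.sqrt s := add_le_add first second
    _ ≤ 4 / Real.sqrt s + 1 := by
        have : (3:ℝ)/Real.sqrt s + 1/Real.sqrt s = 4 / Real.sqrt s := by ring
        linarith

private lemma z_exp_le {z : ℝ} (hz : 0 ≤ z) : z * Real.exp (-z) ≤ Real.exp (-(z/2)) := by
  have hq := Real.add_one_le_exp (z/4)
  have hsq : Real.exp (z/2) = Real.exp (z/4) * Real.exp (z/4) := by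
    rw [← Real.exp_add]; ring_nf
  have hz2 : z ≤ Real.exp (z/2) := by nlinarith [sq_nonneg (1 - z/4), Real.exp_pos (z/4)]
  have h3 : Real.exp (z/2) * Real.exp (-z) = Real.exp (-(z/2)) := by
    rw [← Real.exp_add]; ring_nf
  calc z * Real.exp (-z) ≤ Real.exp (z/2) * Real.exp (-z) :=
        mul_le_mul_of_nonneg_right hz2 (Real.exp_pos _).le
    _ = Real.exp (-(z/2)) := h3

set_option maxHeartbeats 1000000 in
private lemma second_diff_bound {c : ℝ} (hc : 0 < c) (w : ℝ) (hw : 1 ≤ w) :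
    |(Real.exp (-(c*w^2)) - Real.exp (-(c*(w+1)^2))) -
      (Real.exp (-(c*(w+1)^2)) - Real.exp (-(c*(w+2)^2)))|
    ≤ 27 * c * Real.exp (-(c/2*w^2)) := by
  set G : ℝ := Real.exp (-(c*w^2)) with hG
  set x : ℝ := Real.exp (-(c*(2*w+1))) with hx
  set y : ℝ := Real.exp (-(c*(2*w+3))) with hy
  have hG0 : 0 < G := Real.exp_pos _
  have hx0 : 0 < x := Real.exp_pos _
  have hy0 : 0 < y := Real.exp_pos _
  have hw0 : (0:ℝ) < w := lt_of_lt_of_le one_pos hw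
  have hx1 : x ≤ 1 := Real.exp_le_one_iff.2 (by nlinarith)
  have hy1 : y ≤ 1 := Real.exp_le_one_iff.2 (by nlinarith)
  have hyx : y ≤ x := Real.exp_le_exp.2 (by nlinarith)
  have e1 : Real.exp (-(c*(w+1)^2)) = G * x := by
    rw [hG, hx, ← Real.exp_add]; congr 1; ring
  have e2 : Real.exp (-(c*(w+2)^2)) = G * x * y := by
    rw [hG, hx, hy, ← Real.exp_add, ← Real.exp_add]; congr 1; ring
  have h1x : 1 - x ≤ c*(2*w+1) := by
    have := Real.add_one_le_exp (-(c*(2*w+1))); rw [← hx] at this; linarith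
  have h1y : 1 - y ≤ c*(2*w+3) := by
    have := Real.add_one_le_exp (-(c*(2*w+3))); rw [← hy] at this; linarith
  have hxy2c : x - y ≤ 2*c := by
    have hyx' : y = x * Real.exp (-(2*c)) := by
      rw [hx, hy, ← Real.exp_add]; congr 1; ring
    have h2c := Real.add_one_le_exp (-(2*c))
    nlinarith [Real.exp_pos (-(2*c))]
  have habs : |(1 : ℝ) - 2*x + x*y| ≤ (x - y) + (1-x)*(1-y) := by
    rw [abs_le]; constructor <;> nlinarith [mul_nonneg (sub_nonneg.2 hx1) (sub_nonneg.2 hy1)]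
  have hlhs : (G - G*x) - (G*x - G*x*y) = G * (1 - 2*x + x*y) := by ring
  rw [e1, e2, hlhs, abs_mul, abs_of_pos hG0]
  have hbound : G * |1 - 2*x + x*y| ≤ G * (2*c + 25*c^2*w^2) := by
    apply mul_le_mul_of_nonneg_left _ hG0.le
    calc |1 - 2*x + x*y| ≤ (x - y) + (1-x)*(1-y) := habs
      _ ≤ 2*c + (c*(2*w+1))*(c*(2*w+3)) := by
          have hnn1 : 0 ≤ 1 - x := by linarith
          have hnn2 : 0 ≤ 1 - y := by linarith
          have := mul_le_mul h1x h1y hnn2 (by positivity : (0:ℝ) ≤ c*(2*w+1))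
          linarith
      _ ≤ 2*c + 25*c^2*w^2 := by
          have h : (2*w+1)*(2*w+3) ≤ 25*w^2 := by nlinarith [sq_nonneg (w-1)]
          have h2 : (c*(2*w+1))*(c*(2*w+3)) = c^2*((2*w+1)*(2*w+3)) := by ring
          have h3 := mul_le_mul_of_nonneg_left h (sq_nonneg c)
          nlinarith
  have hE : Real.exp (-(c/2*w^2)) > 0 := Real.exp_pos _
  have hGE : G ≤ Real.exp (-(c/2*w^2)) := Real.exp_le_exp.2 (by nlinarith)
  have hz : (c*w^2) * Real.exp (-(c*w^2)) ≤ Real.exp (-(c*w^2/2)) := z_exp_le (by positivity)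
  have hzz : c*w^2*G ≤ Real.exp (-(c/2*w^2)) := by
    rw [hG]
    calc c*w^2*Real.exp (-(c*w^2)) ≤ Real.exp (-(c*w^2/2)) := hz
      _ = Real.exp (-(c/2*w^2)) := by ring_nf
  calc G * |1 - 2*x + x*y| ≤ G * (2*c+25*c^2*w^2) := hbound
    _ = 2*c*G + 25*c*(c*w^2*G) := by ring
    _ ≤ 2*c*Real.exp (-(c/2*w^2)) + 25*c*Real.exp (-(c/2*w^2)) := by
        have h25 : 0 ≤ 25*c := by positivity
        have h2 : 0 ≤ 2*c := by positivity
        nlinarith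
    _ = 27 * c * Real.exp (-(c/2*w^2)) := by ring

private lemma periodic_add_mul (f : ℕ → ℂ) (P : ℕ)
    (hper : ∀ n, f (n + P) = f n) : ∀ k n, f (n + k * P) = f n := by
  intro k
  induction k with
  | zero => simp
  | succ k ih =>
      intro n
      rw [show n + (k+1)*P = (n + k*P) + P by ring, hper, ih]

private lemma periodic_mod (f : ℕ → ℂ) (P : ℕ) (hP : 0 < P)
    (hper : ∀ n, f (n + P) = f n) : ∀ n, f n = f (n % P) := by
  intro n
  conv_lhs => rw [← Nat.mod_add_div' n P]
  exact periodic_add_mul f P hper (n / P) (n % P)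

private lemma periodic_norm_bound (f : ℕ → ℂ) (P : ℕ) (hP : 0 < P)
    (hper : ∀ n, f (n + P) = f n) (n : ℕ) :
    ‖f n‖ ≤ ∑ k ∈ range P, ‖f k‖ := by
  rw [periodic_mod f P hP hper n]
  exact Finset.single_le_sum (f := fun i => ‖f i‖) (fun i _ => norm_nonneg _)
    (mem_range.2 (Nat.mod_lt _ hP))

set_option maxHeartbeats 1000000 in
private lemma key_est (P : ℕ) (hP : 0 < P) (a : ℕ → ℂ)
    (hper : ∀ n, a (n + P) = a n) (hmean : ∑ n ∈ range P, a n = 0)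
    (M : ℝ) (hM : 0 < M) (t : ℝ) (ht : 0 < t) (ht2 : Real.pi * t / M ≤ 2) :
    ‖(∑' n : ℕ, a n * (Real.exp (-(Real.pi * ((n : ℝ) + 1) ^ 2 * t / M)) : ℂ)) -
        (-(1 / (P : ℂ)) * ∑ n ∈ range P, ((n : ℂ) + 1) * a n) *
          (Real.exp (-(Real.pi * t / M)) : ℂ)‖ ≤
      (∑ n ∈ range P, ‖(∑ k ∈ range (n + 1), a k) -
          -(1 / (P : ℂ)) * ∑ j ∈ range P, ((j : ℂ) + 1) * a j‖) *
        (27 * (Real.pi * t / M) * (4 / Real.sqrt (Real.pi * t / M / 2) + 1)) := by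
  have hπ := Real.pi_pos
  set c : ℝ := Real.pi * t / M with hc_def
  have hc : 0 < c := by rw [hc_def]; positivity
  set g : ℕ → ℝ := fun n => Real.exp (-(c * ((n : ℝ) + 1) ^ 2)) with hg_def
  set A : ℂ := -(1 / (P : ℂ)) * ∑ n ∈ range P, ((n : ℂ) + 1) * a n with hA_def
  set T : ℕ → ℂ := fun N => ∑ k ∈ range N, a k with hT_def
  set u : ℕ → ℂ := fun n => T (n + 1) - A with hu_def
  set C₁ : ℝ := ∑ n ∈ range P, ‖u n‖ with hC₁_def
  -- rewrite exponentials
  have hexp_eq : ∀ n : ℕ, Real.exp (-(Real.pi * ((n : ℝ) + 1) ^ 2 * t / M)) = g n := by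
    intro n; rw [hg_def]; congr 1; rw [hc_def]; ring
  have hexp0 : Real.exp (-(Real.pi * t / M)) = g 0 := by
    rw [hg_def]; congr 1; rw [hc_def]; push_cast; ring
  -- basic facts
  have hPne : (P : ℂ) ≠ 0 := Nat.cast_ne_zero.2 hP.ne'
  have hTper : ∀ N, T (N + P) = T N := periodic_sum_shift a P hper hmean
  have hTA : ∑ N ∈ range P, T (N + 1) = (P : ℂ) * A := by
    have h1 : ∑ N ∈ range P, T (N + 1) = ∑ n ∈ range P, ((P : ℂ) - n) * a n :=
      weighted_sum_id a P
    have h2 : ∑ n ∈ range P, ((P : ℂ) - n) * a n = - ∑ n ∈ range P, (n : ℂ) * a n := by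
      have : ∀ n ∈ range P, ((P : ℂ) - n) * a n = (P : ℂ) * a n - (n : ℂ) * a n :=
        fun n _ => by ring
      rw [sum_congr rfl this, sum_sub_distrib, ← mul_sum, hmean, mul_zero, zero_sub]
    have h3 : (P : ℂ) * A = - ∑ n ∈ range P, ((n : ℂ) + 1) * a n := by
      rw [hA_def]; field_simp
    have h4 : ∑ n ∈ range P, ((n : ℂ) + 1) * a n = ∑ n ∈ range P, (n : ℂ) * a n := by
      have : ∀ n ∈ range P, ((n : ℂ) + 1) * a n = (n : ℂ) * a n + a n := fun n _ => by ring
      rw [sum_congr rfl this, sum_add_distrib, hmean, add_zero]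
    rw [h1, h2, h3, h4]
  have humean : ∑ n ∈ range P, u n = 0 := by
    rw [hu_def]
    simp only
    rw [sum_sub_distrib, hTA, sum_const, card_range, nsmul_eq_mul, sub_self]
  have huper : ∀ n, u (n + P) = u n := by
    intro n
    simp only [hu_def]
    rw [show n + P + 1 = (n + 1) + P by omega, hTper]
  have hUbd : ∀ N, ‖∑ n ∈ range N, u n‖ ≤ C₁ :=
    periodic_psum_bound u P hP huper humean
  have hubd : ∀ n, ‖u n‖ ≤ C₁ := periodic_norm_bound u P hP huper
  have hC₁0 : 0 ≤ C₁ := le_trans (norm_nonneg _) (hubd 0)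
  -- facts about g
  have hg_pos : ∀ n, 0 < g n := fun n => Real.exp_pos _
  have hg_le1 : ∀ n, g n ≤ 1 := by
    intro n
    have h0 : (0:ℝ) ≤ c * ((n:ℝ)+1)^2 := by positivity
    exact Real.exp_le_one_iff.2 (by linarith)
  have hg_anti : ∀ n, g (n + 1) ≤ g n := by
    intro n
    apply Real.exp_le_exp.2
    have h1 : ((n:ℝ) + 1) ^ 2 ≤ (((n+1:ℕ):ℝ) + 1) ^ 2 := by
      push_cast; nlinarith [Nat.cast_nonneg (α := ℝ) n]
    nlinarith
  have hg_sum : Summable g := gauss_summable hc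
  have hg_to0 : Tendsto g atTop (nhds 0) := hg_sum.tendsto_atTop_zero
  set Δ : ℕ → ℝ := fun n => g n - g (n + 1) with hΔ_def
  have hΔ_nonneg : ∀ n, 0 ≤ Δ n := fun n => sub_nonneg.2 (hg_anti n)
  have hΔ_le_g : ∀ n, Δ n ≤ g n := fun n => by
    have := (hg_pos (n+1)).le; simp only [hΔ_def]; linarith
  have hΔ_sum : Summable Δ := hg_sum.sub ((summable_nat_add_iff 1).2 hg_sum)
  have hΔ_tsum : ∑' n, Δ n = g 0 := by
    have hpartial : ∀ N, ∑ n ∈ range N, Δ n = g 0 - g N := by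
      intro N
      simp only [hΔ_def]
      exact Finset.sum_range_sub' g N
    have h1 : Tendsto (fun N => ∑ n ∈ range N, Δ n) atTop (nhds (g 0)) := by
      simp only [hpartial]
      simpa using tendsto_const_nhds.sub hg_to0
    exact tendsto_nhds_unique hΔ_sum.hasSum.tendsto_sum_nat h1
  -- summability and bounds
  have hCa : ∀ n, ‖a n‖ ≤ ∑ k ∈ range P, ‖a k‖ := periodic_norm_bound a P hP hper
  set C₀ : ℝ := ∑ k ∈ range P, ‖a k‖ with hC₀_def
  have hC₀0 : 0 ≤ C₀ := sum_nonneg fun i _ => norm_nonneg _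
  have hTbd : ∀ N, ‖T N‖ ≤ C₀ := periodic_psum_bound a P hP hper hmean
  have hΔc_sum : Summable (fun n => ((Δ n : ℝ) : ℂ)) := by
    apply Summable.of_norm
    simpa using hΔ_sum.abs
  have hcast : ∀ n : ℕ, ((g n : ℝ) : ℂ) - ((g (n+1) : ℝ) : ℂ) = ((Δ n : ℝ) : ℂ) := by
    intro n; simp only [hΔ_def]; push_cast; ring
  have sum_ag : Summable (fun n => a n * ((g n : ℝ) : ℂ)) := by
    apply Summable.of_norm
    apply Summable.of_nonneg_of_le (fun n => norm_nonneg _) _ (hg_sum.mul_left C₀)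
    intro n
    rw [norm_mul, Complex.norm_real, Real.norm_eq_abs, abs_of_pos (hg_pos n)]
    exact mul_le_mul_of_nonneg_right (hCa n) (hg_pos n).le
  have sum_TΔ : Summable (fun n => T (n+1) * (((g n : ℝ) : ℂ) - ((g (n+1) : ℝ) : ℂ))) := by
    apply Summable.of_norm
    apply Summable.of_nonneg_of_le (fun n => norm_nonneg _) _ (hΔ_sum.mul_left C₀)
    intro n
    rw [norm_mul, hcast n, Complex.norm_real, Real.norm_eq_abs, abs_of_nonneg (hΔ_nonneg n)]
    exact mul_le_mul (hTbd (n+1)) le_rfl (hΔ_nonneg n) hC₀0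
  have bd1 : Tendsto (fun N => T (N+1) * ((g N : ℝ) : ℂ)) atTop (nhds 0) := by
    refine squeeze_zero_norm (a := fun N => C₀ * g N) (fun N => ?_) ?_
    · 
      rw [norm_mul, Complex.norm_real, Real.norm_eq_abs, abs_of_pos (hg_pos N)]
      exact mul_le_mul_of_nonneg_right (hTbd (N+1)) (hg_pos N).le
    · simpa using hg_to0.const_mul C₀
  have eq1 : ∑' n, (∑ k ∈ range (n+1), a k) * (((g n : ℝ) : ℂ) - ((g (n+1) : ℝ) : ℂ))
      = ∑' n, a n * ((g n : ℝ) : ℂ) :=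
    abel_tsum a (fun n => ((g n : ℝ) : ℂ)) sum_ag sum_TΔ bd1
  have sum_uΔ : Summable (fun n => u n * ((Δ n : ℝ) : ℂ)) := by
    apply Summable.of_norm
    apply Summable.of_nonneg_of_le (fun n => norm_nonneg _) _ (hΔ_sum.mul_left C₁)
    intro n
    rw [norm_mul, Complex.norm_real, Real.norm_eq_abs, abs_of_nonneg (hΔ_nonneg n)]
    exact mul_le_mul (hubd n) le_rfl (hΔ_nonneg n) hC₁0
  have hΔcast2 : ∀ n : ℕ, ‖((Δ n : ℝ) : ℂ) - ((Δ (n+1) : ℝ) : ℂ)‖ = |Δ n - Δ (n+1)| := by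
    intro n; rw [← Complex.ofReal_sub, Complex.norm_real, Real.norm_eq_abs]
  have sum_UD : Summable (fun n => (∑ k ∈ range (n+1), u k) *
      (((Δ n : ℝ) : ℂ) - ((Δ (n+1) : ℝ) : ℂ))) := by
    apply Summable.of_norm
    apply Summable.of_nonneg_of_le (fun n => norm_nonneg _) _
      ((hΔ_sum.add ((summable_nat_add_iff 1).2 hΔ_sum)).mul_left C₁)
    intro n
    rw [norm_mul, hΔcast2 n]
    have habs : |Δ n - Δ (n+1)| ≤ Δ n + Δ (n+1) := by
      rw [abs_le]; constructor
      · have := hΔ_nonneg n; have := hΔ_nonneg (n+1); linarith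
      · have := hΔ_nonneg (n+1); linarith
    exact mul_le_mul (hUbd (n+1)) habs (abs_nonneg _) hC₁0
  have bd2 : Tendsto (fun N => (∑ k ∈ range (N+1), u k) * ((Δ N : ℝ) : ℂ)) atTop (nhds 0) := by
    refine squeeze_zero_norm (a := fun N => C₁ * g N) (fun N => ?_) ?_
    · 
      rw [norm_mul, Complex.norm_real, Real.norm_eq_abs, abs_of_nonneg (hΔ_nonneg N)]
      exact mul_le_mul (hUbd (N+1)) (hΔ_le_g N) (hΔ_nonneg N) hC₁0
    · simpa using hg_to0.const_mul C₁
  have eq2 : ∑' n, (∑ k ∈ range (n+1), u k) * (((Δ n : ℝ) : ℂ) - ((Δ (n+1) : ℝ) : ℂ))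
      = ∑' n, u n * ((Δ n : ℝ) : ℂ) :=
    abel_tsum u (fun n => ((Δ n : ℝ) : ℂ)) sum_uΔ sum_UD bd2
  have sum_TΔ' : Summable (fun n => T (n+1) * ((Δ n : ℝ) : ℂ)) := by
    have : (fun n => T (n+1) * ((Δ n : ℝ) : ℂ))
        = fun n => T (n+1) * (((g n : ℝ) : ℂ) - ((g (n+1) : ℝ) : ℂ)) := by
      funext n; rw [hcast n]
    rw [this]; exact sum_TΔ
  have step2 : ∑' n, T (n+1) * ((Δ n : ℝ) : ℂ)
      = A * ((g 0 : ℝ) : ℂ) + ∑' n, u n * ((Δ n : ℝ) : ℂ) := by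
    have hsplit : ∀ n : ℕ, T (n+1) * ((Δ n : ℝ) : ℂ)
        = A * ((Δ n : ℝ) : ℂ) + u n * ((Δ n : ℝ) : ℂ) := by
      intro n; simp only [hu_def]; ring
    rw [tsum_congr hsplit, Summable.tsum_add (hΔc_sum.mul_left A) sum_uΔ, tsum_mul_left]
    congr 2
    rw [← Complex.ofReal_tsum, hΔ_tsum]
  have hFval : (∑' n, a n * ((g n : ℝ) : ℂ)) - A * ((g 0 : ℝ) : ℂ)
      = ∑' n, (∑ k ∈ range (n+1), u k) * (((Δ n : ℝ) : ℂ) - ((Δ (n+1) : ℝ) : ℂ)) := by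
    have e1' : ∑' n, (∑ k ∈ range (n+1), a k) * ((Δ n : ℝ) : ℂ)
        = ∑' n, a n * ((g n : ℝ) : ℂ) := by
      rw [← eq1]
      exact tsum_congr fun n => by rw [hcast n]
    have e1'' : ∑' n, T (n+1) * ((Δ n : ℝ) : ℂ) = ∑' n, a n * ((g n : ℝ) : ℂ) := e1'
    rw [← e1'', step2, eq2]
    ring
  -- final estimate
  have hterm_bd : ∀ n : ℕ, ‖(∑ k ∈ range (n+1), u k) * (((Δ n : ℝ) : ℂ) - ((Δ (n+1) : ℝ) : ℂ))‖
      ≤ C₁ * (27 * c * Real.exp (-(c/2 * ((n:ℝ)+1)^2))) := by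
    intro n
    rw [norm_mul, hΔcast2 n]
    have h2 : |Δ n - Δ (n+1)| ≤ 27 * c * Real.exp (-(c/2 * ((n:ℝ)+1)^2)) := by
      have hw : (1:ℝ) ≤ (n:ℝ) + 1 := by
        have := Nat.cast_nonneg (α := ℝ) n; linarith
      have hb := second_diff_bound hc ((n:ℝ)+1) hw
      have e2 : g (n+1) = Real.exp (-(c*(((n:ℝ)+1)+1)^2)) := by
        simp only [hg_def]; push_cast; ring_nf
      have e3 : g (n+2) = Real.exp (-(c*(((n:ℝ)+1)+2)^2)) := by
        simp only [hg_def]; push_cast; ring_nf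
      have e1 : g n = Real.exp (-(c*((n:ℝ)+1)^2)) := rfl
      simp only [hΔ_def]
      rw [show n + 1 + 1 = n + 2 by omega, e1, e2, e3]
      exact hb
    exact mul_le_mul (hUbd (n+1)) h2 (abs_nonneg _) hC₁0
  have hgauss2 : Summable (fun n : ℕ => Real.exp (-(c/2 * ((n:ℝ)+1)^2))) :=
    gauss_summable (half_pos hc)
  have hsumE : Summable (fun n : ℕ => C₁ * (27 * c * Real.exp (-(c/2 * ((n:ℝ)+1)^2)))) :=
    (hgauss2.mul_left _).mul_left _
  have hnorm_sum : Summable (fun n => ‖(∑ k ∈ range (n+1), u k) *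
      (((Δ n : ℝ) : ℂ) - ((Δ (n+1) : ℝ) : ℂ))‖) :=
    Summable.of_nonneg_of_le (fun n => norm_nonneg _) hterm_bd hsumE
  have hnorm : ‖∑' n, (∑ k ∈ range (n+1), u k) * (((Δ n : ℝ) : ℂ) - ((Δ (n+1) : ℝ) : ℂ))‖
      ≤ C₁ * (27 * c * (4 / Real.sqrt (c/2) + 1)) := by
    calc ‖∑' n, (∑ k ∈ range (n+1), u k) * (((Δ n : ℝ) : ℂ) - ((Δ (n+1) : ℝ) : ℂ))‖
        ≤ ∑' n, ‖(∑ k ∈ range (n+1), u k) * (((Δ n : ℝ) : ℂ) - ((Δ (n+1) : ℝ) : ℂ))‖ :=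
          norm_tsum_le_tsum_norm hnorm_sum
      _ ≤ ∑' n : ℕ, C₁ * (27 * c * Real.exp (-(c/2 * ((n:ℝ)+1)^2))) :=
          Summable.tsum_le_tsum hterm_bd hnorm_sum hsumE
      _ = C₁ * (27 * c * ∑' n : ℕ, Real.exp (-(c/2 * ((n:ℝ)+1)^2))) := by
          rw [tsum_mul_left, tsum_mul_left]
      _ ≤ C₁ * (27 * c * (4 / Real.sqrt (c/2) + 1)) := by
          have hg2 : (∑' n : ℕ, Real.exp (-(c/2 * ((n:ℝ)+1)^2))) ≤ 4 / Real.sqrt (c/2) + 1 :=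
            gauss_bound (half_pos hc) (by linarith)
          have h27 : (0:ℝ) ≤ 27 * c := by positivity
          apply mul_le_mul_of_nonneg_left _ hC₁0
          exact mul_le_mul_of_nonneg_left hg2 h27
  -- assemble
  simp only [hexp_eq, hexp0]
  rw [hexp0]
  have hC₁eq : (∑ n ∈ range P, ‖(∑ k ∈ range (n + 1), a k) - A‖) = C₁ := rfl
  calc ‖(∑' n, a n * ((g n : ℝ) : ℂ)) - A * ((g 0 : ℝ) : ℂ)‖
      = ‖∑' n, (∑ k ∈ range (n+1), u k) * (((Δ n : ℝ) : ℂ) - ((Δ (n+1) : ℝ) : ℂ))‖ := by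
        rw [hFval]
    _ ≤ C₁ * (27 * c * (4 / Real.sqrt (c/2) + 1)) := hnorm
    _ = (∑ n ∈ range P, ‖(∑ k ∈ range (n + 1), a k) - A‖) * (27 * c * (4 / Real.sqrt (c/2) + 1)) := by
        rw [hC₁eq]


set_option maxHeartbeats 1000000 in
private lemma key (P : ℕ) (hP : 0 < P) (a : ℕ → ℂ)
    (hper : ∀ n, a (n + P) = a n) (hmean : ∑ n ∈ range P, a n = 0)
    (M : ℝ) (hM : 0 < M) :
    Tendsto (fun t : ℝ => ∑' n : ℕ,
        a n * (Real.exp (-(Real.pi * ((n : ℝ) + 1) ^ 2 * t / M)) : ℂ))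
      (nhdsWithin 0 (Set.Ioi 0))
      (nhds (-(1 / (P : ℂ)) * ∑ n ∈ range P, ((n : ℂ) + 1) * a n)) := by
  have hπ := Real.pi_pos
  set A : ℂ := -(1 / (P : ℂ)) * ∑ n ∈ range P, ((n : ℂ) + 1) * a n with hA_def
  set C₁ : ℝ := ∑ n ∈ range P, ‖(∑ k ∈ range (n + 1), a k) - A‖ with hC₁_def
  have hC₁0 : 0 ≤ C₁ := sum_nonneg fun i _ => norm_nonneg _
  have h1 : Tendsto (fun t : ℝ => A * (Real.exp (-(Real.pi * t / M)) : ℂ))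
      (nhdsWithin 0 (Set.Ioi 0)) (nhds A) := by
    have hcont : Continuous (fun t : ℝ => A * (Real.exp (-(Real.pi * t / M)) : ℂ)) := by
      apply continuous_const.mul
      apply Complex.continuous_ofReal.comp
      apply Real.continuous_exp.comp
      continuity
    have h0 : A * ((Real.exp (-(Real.pi * 0 / M)) : ℝ) : ℂ) = A := by norm_num
    have := hcont.tendsto 0
    rw [h0] at this
    exact this.mono_left nhdsWithin_le_nhds
  -- the simplified bound function
  set γ : ℝ → ℝ := fun t => C₁ * (216 * Real.sqrt (Real.pi * t / M / 2) + 54 * (Real.pi * t / M / 2))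
    with hγ_def
  have hγ0 : Tendsto γ (nhdsWithin 0 (Set.Ioi 0)) (nhds 0) := by
    have hcont : Continuous γ := by
      apply continuous_const.mul
      apply Continuous.add
      · apply continuous_const.mul
        apply Real.continuous_sqrt.comp
        continuity
      · apply continuous_const.mul
        continuity
    have h0 : γ 0 = 0 := by
      simp only [hγ_def]
      norm_num [Real.sqrt_zero]
    have := hcont.tendsto 0
    rw [h0] at this
    exact this.mono_left nhdsWithin_le_nhds
  have hβγ : ∀ t : ℝ, 0 < t →
      C₁ * (27 * (Real.pi * t / M) * (4 / Real.sqrt (Real.pi * t / M / 2) + 1)) = γ t := by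
    intro t ht
    set s : ℝ := Real.pi * t / M / 2 with hs_def
    have hs : 0 < s := by rw [hs_def]; positivity
    have hsq : 0 < Real.sqrt s := Real.sqrt_pos.2 hs
    have hds : s / Real.sqrt s = Real.sqrt s := Real.div_sqrt
    have h2s : Real.pi * t / M = 2 * s := by rw [hs_def]; ring
    rw [hγ_def, h2s]
    have : 27 * (2 * s) * (4 / Real.sqrt s + 1) = 216 * (s / Real.sqrt s) + 54 * s := by
      ring
    rw [this, hds]
  have h2 : Tendsto (fun t : ℝ =>
      (∑' n : ℕ, a n * (Real.exp (-(Real.pi * ((n : ℝ) + 1) ^ 2 * t / M)) : ℂ))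
        - A * (Real.exp (-(Real.pi * t / M)) : ℂ))
      (nhdsWithin 0 (Set.Ioi 0)) (nhds 0) := by
    apply squeeze_zero_norm' _ hγ0
    have hmem : Set.Ioo (0:ℝ) (2 * M / Real.pi) ∈ nhdsWithin (0:ℝ) (Set.Ioi 0) :=
      Ioo_mem_nhdsGT_of_mem (by constructor <;> [exact le_refl 0; positivity])
    filter_upwards [hmem] with t ht
    have ht0 : 0 < t := ht.1
    have ht2 : Real.pi * t / M ≤ 2 := by
      rw [div_le_iff₀ hM]
      have := ht.2
      rw [lt_div_iff₀ hπ] at this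
      nlinarith
    rw [← hβγ t ht0]
    exact key_est P hP a hper hmean M hM t ht0 ht2
  have hfinal := h2.add h1
  rw [zero_add] at hfinal
  refine hfinal.congr ?_
  intro t; ring

set_option maxHeartbeats 1000000 in
open Filter in
/-- Radial limit of the one-dimensional false theta function at `τ = 1/N`. -/
theorem false_theta_radial_limit (M N : ℕ) (hM : 0 < M) (hN : 0 < N)
    (μ : ℕ) (hμ : μ < M) (h2μ : ¬ ((M : ℤ) ∣ 2 * μ))
    (ψ : ℤ → ℂ)
    (hψ : ∀ n : ℤ, ψ n =
      if (n : ZMod M) = (μ : ZMod M) then 1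
      else if (n : ZMod M) = -(μ : ZMod M) then -1 else 0) :
    Tendsto (fun t : ℝ => ∑' n : ℕ,
        ψ (n + 1) * Complex.exp (Real.pi * Complex.I * ((n : ℂ) + 1) ^ 2 / (M * N)) *
          Complex.exp (-(Real.pi * ((n : ℝ) + 1) ^ 2 * t / M : ℝ)))
      (nhdsWithin 0 (Set.Ioi 0))
      (nhds (-(1 / (2 * M * N)) * ∑ n ∈ Finset.range (2 * M * N),
        ((n : ℂ) + 1) * ψ (n + 1) *
          Complex.exp (Real.pi * Complex.I * ((n : ℂ) + 1) ^ 2 / (M * N)))) := by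
  have hπ := Real.pi_pos
  haveI : NeZero M := ⟨hM.ne'⟩
  have hMN0 : ((M : ℂ) * (N : ℂ)) ≠ 0 :=
    mul_ne_zero (Nat.cast_ne_zero.2 hM.ne') (Nat.cast_ne_zero.2 hN.ne')
  have hP : 0 < 2 * M * N := by positivity
  have hP2 : 2 ≤ 2 * M * N := by nlinarith [Nat.one_le_iff_ne_zero.2 hM.ne', Nat.one_le_iff_ne_zero.2 hN.ne']
  -- ψ facts
  have hμ0 : (μ : ZMod M) ≠ 0 := by
    intro h
    apply h2μ
    have hdvd : M ∣ μ := (ZMod.natCast_eq_zero_iff μ M).1 h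
    exact_mod_cast (Int.natCast_dvd_natCast.2 (Dvd.dvd.mul_left hdvd 2))
  have hne : (μ : ZMod M) ≠ -(μ : ZMod M) := by
    intro h
    apply h2μ
    have h2 : ((2 * μ : ℕ) : ZMod M) = 0 := by
      push_cast
      rw [two_mul]
      nth_rewrite 2 [h]
      ring
    have hdvd : M ∣ 2 * μ := (ZMod.natCast_eq_zero_iff (2*μ) M).1 h2
    exact_mod_cast (Int.natCast_dvd_natCast.2 hdvd)
  have hPz : (((2 * M * N : ℕ) : ℤ) : ZMod M) = 0 := by
    push_cast [ZMod.natCast_self]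
    ring
  have hψ_per : ∀ x : ℤ, ψ (x + ((2 * M * N : ℕ) : ℤ)) = ψ x := by
    intro x
    rw [hψ, hψ]
    have hz : (((x + ((2 * M * N : ℕ) : ℤ)) : ℤ) : ZMod M) = (x : ZMod M) := by
      push_cast [ZMod.natCast_self]
      ring
    rw [hz]
  have hψ_neg : ∀ x : ℤ, ψ (((2 * M * N : ℕ) : ℤ) - x) = -ψ x := by
    intro x
    rw [hψ, hψ]
    have hz : (((((2 * M * N : ℕ) : ℤ) - x) : ℤ) : ZMod M) = -(x : ZMod M) := by
      push_cast [ZMod.natCast_self]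
      ring
    rw [hz]
    by_cases h1 : (x : ZMod M) = (μ : ZMod M)
    · rw [if_pos h1, h1]
      rw [if_neg (fun hh => hne hh.symm)]
      rw [if_pos rfl]
    · rw [if_neg h1]
      by_cases h2 : (x : ZMod M) = -(μ : ZMod M)
      · rw [if_pos h2, h2, neg_neg, if_pos rfl]
        norm_num
      · rw [if_neg h2]
        rw [if_neg (by
          intro hh
          exact h2 (by rw [← neg_neg (x : ZMod M), hh]))]
        rw [if_neg (by
          intro hh
          exact h1 (neg_injective hh))]
        norm_num
  have hψ_P : ψ ((2 * M * N : ℕ) : ℤ) = 0 := by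
    rw [hψ, hPz]
    rw [if_neg (fun h => hμ0 h.symm)]
    rw [if_neg (by
      intro h
      exact hμ0 (neg_eq_zero.1 h.symm))]
  -- the sequence
  set a : ℕ → ℂ := fun n => ψ (n + 1) *
    Complex.exp (Real.pi * Complex.I * ((n : ℂ) + 1) ^ 2 / (M * N)) with ha_def
  have haper : ∀ n, a (n + 2 * M * N) = a n := by
    intro n
    simp only [ha_def]
    congr 1
    · have h1 : ((n + 2 * M * N : ℕ) : ℤ) + 1 = ((n : ℤ) + 1) + ((2 * M * N : ℕ) : ℤ) := by
        push_cast; ring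
      rw [show (((n + 2 * M * N : ℕ) : ℤ) : ℤ) + 1 = ((n : ℤ) + 1) + ((2 * M * N : ℕ) : ℤ) from h1]
      exact hψ_per ((n : ℤ) + 1)
    · have hdiff : (Real.pi : ℂ) * Complex.I * (((n + 2 * M * N : ℕ) : ℂ) + 1) ^ 2 / ((M : ℂ) * (N : ℂ))
          = Real.pi * Complex.I * (((n : ℂ)) + 1) ^ 2 / ((M : ℂ) * (N : ℂ))
            + ((2 * (n + 1) + 2 * M * N : ℕ) : ℂ) * (2 * Real.pi * Complex.I) := by
        rw [div_add' _ _ _ hMN0, div_left_inj' hMN0]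
        push_cast
        ring
      rw [hdiff, Complex.exp_add]
      have hone : Complex.exp (((2 * (n + 1) + 2 * M * N : ℕ) : ℂ) * (2 * Real.pi * Complex.I)) = 1 := by
        have harg : ((2 * (n + 1) + 2 * M * N : ℕ) : ℂ)
            = (((2 * (n + 1) + 2 * M * N : ℕ) : ℤ) : ℂ) := by push_cast; ring
        rw [harg]
        exact Complex.exp_int_mul_two_pi_mul_I _
      rw [hone, mul_one]
  have hamean : ∑ n ∈ range (2 * M * N), a n = 0 := by
    have hlast : a (2 * M * N - 1) = 0 := by
      simp only [ha_def]
      have h1 : ((2 * M * N - 1 : ℕ) : ℤ) + 1 = ((2 * M * N : ℕ) : ℤ) := by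
        push_cast [Nat.cast_sub hP]
        ring
      rw [h1, hψ_P, zero_mul]
    have hrefl : ∀ n, n < 2 * M * N - 1 → a (2 * M * N - 2 - n) = -a n := by
      intro n hn
      simp only [ha_def]
      have hle1 : n + 2 ≤ 2 * M * N := by omega
      have hψ_eq : ψ (((2 * M * N - 2 - n : ℕ) : ℤ) + 1) = -ψ ((n : ℤ) + 1) := by
        have h1 : ((2 * M * N - 2 - n : ℕ) : ℤ) + 1 = ((2 * M * N : ℕ) : ℤ) - ((n : ℤ) + 1) := by
          rw [show 2 * M * N - 2 - n = 2 * M * N - (n + 2) by omega]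
          push_cast [Nat.cast_sub hle1]
          ring
        rw [h1]
        exact hψ_neg ((n : ℤ) + 1)
      have hE_eq : Complex.exp (Real.pi * Complex.I * (((2 * M * N - 2 - n : ℕ) : ℂ) + 1) ^ 2 / ((M : ℂ) * (N : ℂ)))
          = Complex.exp (Real.pi * Complex.I * (((n : ℂ)) + 1) ^ 2 / ((M : ℂ) * (N : ℂ))) := by
        have hcast : ((2 * M * N - 2 - n : ℕ) : ℂ) + 1 = 2 * (M : ℂ) * (N : ℂ) - ((n : ℂ) + 1) := by
          rw [show 2 * M * N - 2 - n = 2 * M * N - (n + 2) by omega]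
          push_cast [Nat.cast_sub hle1]
          ring
        have hdiff : (Real.pi : ℂ) * Complex.I * (((2 * M * N - 2 - n : ℕ) : ℂ) + 1) ^ 2 / ((M : ℂ) * (N : ℂ))
            = Real.pi * Complex.I * (((n : ℂ)) + 1) ^ 2 / ((M : ℂ) * (N : ℂ))
              + ((2 * (M * N : ℕ) - 2 * ((n : ℤ) + 1) : ℤ) : ℂ) * (2 * Real.pi * Complex.I) := by
          rw [hcast]
          rw [div_add' _ _ _ hMN0, div_left_inj' hMN0]
          push_cast
          ring
        rw [hdiff, Complex.exp_add, Complex.exp_int_mul_two_pi_mul_I, mul_one]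
      rw [hψ_eq, hE_eq]
      ring
    have hsplit : ∑ n ∈ range (2 * M * N), a n
        = ∑ n ∈ range ((2 * M * N - 1) + 1), a n := by
      rw [show (2 * M * N - 1) + 1 = 2 * M * N from by omega]
    rw [hsplit, sum_range_succ, hlast, add_zero]
    have hrev : ∑ n ∈ range (2 * M * N - 1), a n = -∑ n ∈ range (2 * M * N - 1), a n := by
      conv_lhs => rw [← Finset.sum_range_reflect]
      rw [← Finset.sum_neg_distrib]
      apply sum_congr rfl
      intro n hn
      rw [mem_range] at hn
      rw [show 2 * M * N - 1 - 1 - n = 2 * M * N - 2 - n by omega]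
      exact hrefl n hn
    have h3 : (2 : ℂ) * ∑ n ∈ range (2 * M * N - 1), a n = 0 := by
      linear_combination hrev
    have h4 := mul_eq_zero.1 h3
    rcases h4 with h4 | h4
    · norm_num at h4
    · exact h4
  -- apply key
  have hMr : (0 : ℝ) < (M : ℝ) := by exact_mod_cast hM
  have hkey := key (2 * M * N) hP a haper hamean (M : ℝ) hMr
  have hfun : ∀ t : ℝ,
      (∑' n : ℕ, a n * ((Real.exp (-(Real.pi * ((n : ℝ) + 1) ^ 2 * t / (M : ℝ))) : ℝ) : ℂ))
        = ∑' n : ℕ, ψ (n + 1) * Complex.exp (Real.pi * Complex.I * ((n : ℂ) + 1) ^ 2 / (M * N)) *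
            Complex.exp (-(Real.pi * ((n : ℝ) + 1) ^ 2 * t / M : ℝ)) := by
    intro t
    apply tsum_congr
    intro n
    rw [Complex.ofReal_exp, Complex.ofReal_neg]
  have hlim : -(1 / ((2 * M * N : ℕ) : ℂ)) * ∑ n ∈ range (2 * M * N), ((n : ℂ) + 1) * a n
      = -(1 / (2 * (M : ℂ) * (N : ℂ))) * ∑ n ∈ Finset.range (2 * M * N),
          ((n : ℂ) + 1) * ψ (n + 1) *
            Complex.exp (Real.pi * Complex.I * ((n : ℂ) + 1) ^ 2 / (M * N)) := by
    have hc : ((2 * M * N : ℕ) : ℂ) = 2 * (M : ℂ) * (N : ℂ) := by push_cast; ring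
    rw [hc]
    congr 1
    apply sum_congr rfl
    intro n _
    simp only [ha_def]
    ring
  rw [hlim] at hkey
  exact hkey.congr hfun
end

section
/- For $\tau, z$ in the upper half-plane and a real symmetric positive definite $2\times 2$ matrix $A$ with bilinear form $B(\mathbf{x},\mathbf{y}) = \mathbf{x}^T A \mathbf{y}$, quadratic form $Q(\mathbf{x}) = \frac12 B(\mathbf{x},\mathbf{x})$, and a vector $\mathbf{c} \in \mathbb{R}^2$ with $2Q(\mathbf{c})=1$, define $f_{\tau,z}(\mathbf{x}) = B(\mathbf{x},\mathbf{c})\, e^{2\pi i Q(\mathbf{x})\tau}\, e^{\pi i (z-\tau)B(\mathbf{x},\mathbf{c})^2}$. Then the Fourier transform with respect to $B$, namely $\mathcal{F}(f_{\tau,z})(\mathbf{x}) = \int_{\mathbb{R}^2} f_{\tau,z}(\mathbf{y}) e^{-2\pi i B(\mathbf{x},\mathbf{y})}\,d\mathbf{y}$, satisfies $\mathcal{F}(f_{\tau,z})(\mathbf{x}) = \frac{-i\,(-i\tau)^{-1/2}(-iz)^{-3/2}}{\sqrt{\det A}}\, f_{-1/\tau,\,-1/z}(\mathbf{x})$. 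-/
open Complex MeasureTheory Matrix FourierTransform
open scoped MatrixOrder




lemma gauss_plain {b : ℂ} (hb : 0 < b.re) (t : ℝ) :
    ∫ a : ℝ, Complex.exp (-(Real.pi : ℂ) * b * a ^ 2 + -2 * Real.pi * I * t * a)
      = b ^ (-(1 / 2) : ℂ) * Complex.exp (-Real.pi / b * t ^ 2) := by
  have hb0 : b ≠ 0 := fun h => by simp [h] at hb
  have h := congrFun (fourier_gaussian_pi hb) t
  rw [Real.fourier_real_eq_integral_exp_smul] at h
  simp_rw [smul_eq_mul, ← Complex.exp_add] at h
  rw [show b ^ (-(1 / 2) : ℂ) = 1 / b ^ (1 / 2 : ℂ) by rw [Complex.cpow_neg]; exact (one_div _).symm]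
  rw [← h]
  congr 1; funext a; congr 1; push_cast; ring


lemma gauss_mul {b : ℂ} (hb : 0 < b.re) (t : ℝ) :
    ∫ a : ℝ, (a : ℂ) * Complex.exp (-(Real.pi : ℂ) * b * a ^ 2 + -2 * Real.pi * I * t * a)
      = -I * b ^ (-(3 / 2) : ℂ) * t * Complex.exp (-Real.pi / b * t ^ 2) := by
  have hb0 : b ≠ 0 := fun h => by simp [h] at hb
  have hπb : 0 < ((Real.pi : ℂ) * b).re := by
    rw [show ((Real.pi : ℂ) * b).re = Real.pi * b.re by simp [Complex.mul_re]]
    positivity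
  set f : ℝ → ℂ := fun a => Complex.exp (-(Real.pi : ℂ) * b * a ^ 2) with hfdef
  have hf : Integrable f := by
    have := integrable_cexp_quadratic hπb 0 0
    simpa [f, neg_mul, mul_assoc] using this
  have hf' : Integrable (fun a : ℝ => a • f a) := by
    have := integrable_mul_cexp_neg_mul_sq hπb
    simpa [f, neg_mul, mul_assoc, smul_eq_mul] using this
  have key := congrFun (Real.deriv_fourier hf hf') t
  have hFf : 𝓕 f = fun s : ℝ => 1 / b ^ (1 / 2 : ℂ) * Complex.exp (-Real.pi / b * (s : ℂ) ^ 2) := by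
    rw [hfdef]; exact fourier_gaussian_pi hb
  have hD : HasDerivAt (fun s : ℝ => 1 / b ^ (1 / 2 : ℂ) * Complex.exp (-Real.pi / b * (s : ℂ) ^ 2))
      (1 / b ^ (1 / 2 : ℂ) * (Complex.exp (-Real.pi / b * (t : ℂ) ^ 2) * (-Real.pi / b * (2 * t)))) t := by
    have hp : HasDerivAt (fun w : ℂ => -(Real.pi : ℂ) / b * w ^ 2) (-Real.pi / b * (2 * t)) (t : ℂ) := by
      simpa [mul_comm] using (HasDerivAt.const_mul (-(Real.pi : ℂ) / b) (hasDerivAt_pow 2 (t : ℂ)))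
    exact ((hp.cexp).comp_ofReal).const_mul _
  have hderiv : deriv (𝓕 f) t
      = 1 / b ^ (1 / 2 : ℂ) * (Complex.exp (-Real.pi / b * (t : ℂ) ^ 2) * (-Real.pi / b * (2 * t))) := by
    rw [hFf]; exact hD.deriv
  have hR : 𝓕 (fun a : ℝ => (-2 * Real.pi * I * a) • f a) t
      = (-2 * Real.pi * I) * ∫ a : ℝ, (a : ℂ) * Complex.exp (-(Real.pi : ℂ) * b * a ^ 2 + -2 * Real.pi * I * t * a) := by
    rw [Real.fourier_real_eq_integral_exp_smul, ← integral_const_mul]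
    congr 1; funext a
    have he : Complex.exp ((↑(-2 * Real.pi * a * t) : ℂ) * I) * Complex.exp (-(Real.pi : ℂ) * b * a ^ 2)
        = Complex.exp (-(Real.pi : ℂ) * b * a ^ 2 + -2 * Real.pi * I * t * a) := by
      rw [← Complex.exp_add]; congr 1; push_cast; ring
    simp only [f, smul_eq_mul]
    rw [← he]; ring
  have hInt : (-2 * (Real.pi : ℂ) * I) * (∫ a : ℝ, (a : ℂ) * Complex.exp (-(Real.pi : ℂ) * b * a ^ 2 + -2 * Real.pi * I * t * a))
      = 1 / b ^ (1 / 2 : ℂ) * (Complex.exp (-Real.pi / b * (t : ℂ) ^ 2) * (-Real.pi / b * (2 * t))) := by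
    rw [← hR, ← key, hderiv]
  have h2πI : (-2 * (Real.pi : ℂ) * I) ≠ 0 := by
    simp [Real.pi_ne_zero, I_ne_zero]
  have hhalf : b ^ ((1 : ℂ) / 2) ≠ 0 := by
    simp [Complex.cpow_eq_zero_iff, hb0]
  have hsplit : b ^ (-(3 / 2) : ℂ) = (b ^ ((1 : ℂ) / 2) * b)⁻¹ := by
    rw [Complex.cpow_neg, show (3 / 2 : ℂ) = 1 / 2 + 1 by norm_num, Complex.cpow_add _ _ hb0,
      Complex.cpow_one]
  have hπ0 : (Real.pi : ℂ) ≠ 0 := by exact_mod_cast Real.pi_ne_zero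
  rw [hsplit]
  apply mul_left_cancel₀ h2πI
  rw [hInt]
  field_simp
  ring_nf
  simp only [Complex.I_sq]
  ring


lemma integral_comp_mulVec_aux {M : Matrix (Fin 2) (Fin 2) ℝ} (hM : M.det ≠ 0)
    (g : (Fin 2 → ℝ) → ℂ) :
    ∫ y : Fin 2 → ℝ, g y = ((|M.det| : ℝ) : ℂ) * ∫ u : Fin 2 → ℝ, g (M.mulVec u) := by
  have hinv : Invertible M := M.invertibleOfIsUnitDet (isUnit_iff_ne_zero.mpr hM)
  let e : (Fin 2 → ℝ) ≃ₗ[ℝ] (Fin 2 → ℝ) := M.toLinearEquiv' hinv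
  have hme : MeasurableEmbedding (fun u : Fin 2 → ℝ => M.mulVec u) := by
    have h := (e.toContinuousLinearEquiv).toHomeomorph.measurableEmbedding
    have : ⇑e.toContinuousLinearEquiv.toHomeomorph = fun u : Fin 2 → ℝ => M.mulVec u := by
      funext u
      show (M.toLinearEquiv' hinv) u = M.mulVec u
      exact Matrix.toLin'_apply M u
    rwa [this] at h
  have hmap : Measure.map (fun u : Fin 2 → ℝ => M.mulVec u) volume
      = ENNReal.ofReal |M.det|⁻¹ • volume := by
    have h := Real.map_matrix_volume_pi_eq_smul_volume_pi hM
    have h2 : ⇑(Matrix.toLin' M) = fun u : Fin 2 → ℝ => M.mulVec u := by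
      funext u; simp [Matrix.toLin'_apply]
    rw [h2] at h
    rwa [abs_inv] at h
  have h3 : ∫ u : Fin 2 → ℝ, g (M.mulVec u)
      = |M.det|⁻¹ • ∫ y : Fin 2 → ℝ, g y := by
    rw [← hme.integral_map, hmap, integral_smul_measure,
      ENNReal.toReal_ofReal (by positivity)]
  rw [h3]
  rw [Complex.real_smul, ← mul_assoc, ← Complex.ofReal_mul,
    mul_inv_cancel₀ (abs_ne_zero.mpr hM), Complex.ofReal_one, one_mul]

open Complex MeasureTheory Matrix FourierTransform in
/-- Fourier transform of the kernel `f_{τ,z}` of the bivariate theta function. -/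
theorem fourier_transform_kernel (A : Matrix (Fin 2) (Fin 2) ℝ)
    (hsymm : A.IsSymm) (hpos : A.PosDef)
    (c : Fin 2 → ℝ) (hc : c ⬝ᵥ A.mulVec c = 1)
    (τ z : ℂ) (hτ : 0 < τ.im) (hz : 0 < z.im)
    (f : ℂ → ℂ → (Fin 2 → ℝ) → ℂ)
    (hf : ∀ (τ' z' : ℂ) (x : Fin 2 → ℝ), f τ' z' x =
      ((x ⬝ᵥ A.mulVec c : ℝ) : ℂ) *
        Complex.exp (2 * Real.pi * I * (((x ⬝ᵥ A.mulVec x : ℝ) : ℂ) / 2) * τ') *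
        Complex.exp (Real.pi * I * (z' - τ') * ((x ⬝ᵥ A.mulVec c : ℝ) : ℂ) ^ 2)) :
    ∀ x : Fin 2 → ℝ,
      (∫ y : Fin 2 → ℝ, f τ z y * Complex.exp (-(2 * Real.pi * I * ((x ⬝ᵥ A.mulVec y : ℝ) : ℂ)))) =
        -I * (-I * τ) ^ (-(1 / 2 : ℂ)) * (-I * z) ^ (-(3 / 2 : ℂ)) / Real.sqrt A.det *
          f (-1 / τ) (-1 / z) x := by
  intro x
  classical
  have hA := hpos.posSemidef
  set S : Matrix (Fin 2) (Fin 2) ℝ := CFC.sqrt A with hSdef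
  have hSH : Sᵀ = S := by
    have h2 : Sᴴ = S := (CFC.sqrt_nonneg A).posSemidef.1
    rwa [Matrix.conjTranspose_eq_transpose_of_trivial] at h2
  have hSS : S * S = A := CFC.sqrt_mul_sqrt_self A hA.nonneg
  set w : Fin 2 → ℝ := S.mulVec c with hwdef
  have hw : w 0 ^ 2 + w 1 ^ 2 = 1 := by
    have h1 : c ⬝ᵥ A.mulVec c = w ⬝ᵥ w := by
      rw [← hSS, ← Matrix.mulVec_mulVec, Matrix.dotProduct_mulVec]
      congr 1
      rw [← hSH, Matrix.vecMul_transpose]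
    rw [h1] at hc
    simp only [dotProduct, Fin.sum_univ_two] at hc
    linear_combination hc
  set R : Matrix (Fin 2) (Fin 2) ℝ := !![w 0, w 1; -w 1, w 0] with hRdef
  set C : Matrix (Fin 2) (Fin 2) ℝ := R * S with hCdef
  have hRtR : Rᵀ * R = 1 := by
    ext i j
    fin_cases i <;> fin_cases j <;>
      simp [hRdef, Matrix.mul_apply, Matrix.transpose_apply, Fin.sum_univ_two, Matrix.one_apply,
        Matrix.vecHead, Matrix.vecTail, Matrix.transpose] <;>
      nlinarith [hw]
  have hCtC : Cᵀ * C = A := by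
    rw [hCdef, Matrix.transpose_mul, hSH, mul_assoc, ← mul_assoc Rᵀ R S, hRtR, one_mul, hSS]
  have hCc : C.mulVec c = ![1, 0] := by
    rw [hCdef, ← Matrix.mulVec_mulVec, ← hwdef]
    funext i
    fin_cases i <;>
      simp [hRdef, Matrix.mulVec, dotProduct, Fin.sum_univ_two]
    · linear_combination hw
    · ring
  have hdetA : (0 : ℝ) < A.det := hpos.det_pos
  have hdet2 : C.det * C.det = A.det := by
    have h := congrArg Matrix.det hCtC
    rwa [Matrix.det_mul, Matrix.det_transpose] at h
  have hdetC : C.det ≠ 0 := by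
    intro h
    rw [h, zero_mul] at hdet2
    exact absurd hdet2.symm (ne_of_gt hdetA)
  have hsA : Real.sqrt A.det = |C.det| := by
    rw [← hdet2, Real.sqrt_mul_self_eq_abs]
  set D : Matrix (Fin 2) (Fin 2) ℝ := C⁻¹ with hDdef
  have hCD : C * D = 1 := Matrix.mul_nonsing_inv C (isUnit_iff_ne_zero.mpr hdetC)
  have hdet1 : C.det * D.det = 1 := by
    have h := congrArg Matrix.det hCD
    rwa [Matrix.det_mul, Matrix.det_one] at h
  have hdetD : D.det ≠ 0 := by
    intro h; rw [h, mul_zero] at hdet1; exact zero_ne_one hdet1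
  have habsD : |D.det| = |C.det|⁻¹ := by
    have hD' : D.det = C.det⁻¹ := eq_inv_of_mul_eq_one_left (by linarith [hdet1, mul_comm C.det D.det] )
    rw [hD', abs_inv]
  set v : Fin 2 → ℝ := C.mulVec x with hvdef
  have hAm : ∀ u : Fin 2 → ℝ, A.mulVec (D.mulVec u) = Cᵀ.mulVec u := by
    intro u
    rw [← hCtC, ← Matrix.mulVec_mulVec, Matrix.mulVec_mulVec u C D, hCD, Matrix.one_mulVec]
  have hdotT : ∀ p u : Fin 2 → ℝ, p ⬝ᵥ Cᵀ.mulVec u = C.mulVec p ⬝ᵥ u := by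
    intro p u
    rw [Matrix.dotProduct_mulVec, Matrix.vecMul_transpose]
  have hACc : A.mulVec c = Cᵀ.mulVec ![1, 0] := by
    rw [← hCtC, ← Matrix.mulVec_mulVec, hCc]
  have h1 : ∀ u : Fin 2 → ℝ, (D.mulVec u) ⬝ᵥ A.mulVec (D.mulVec u) = u 0 ^ 2 + u 1 ^ 2 := by
    intro u
    rw [hAm, hdotT, Matrix.mulVec_mulVec, hCD, Matrix.one_mulVec]
    simp [dotProduct, Fin.sum_univ_two]; ring
  have h2 : ∀ u : Fin 2 → ℝ, (D.mulVec u) ⬝ᵥ A.mulVec c = u 0 := by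
    intro u
    rw [hACc, hdotT, Matrix.mulVec_mulVec, hCD, Matrix.one_mulVec]
    simp [dotProduct, Fin.sum_univ_two]
  have h3 : ∀ u : Fin 2 → ℝ, x ⬝ᵥ A.mulVec (D.mulVec u) = v 0 * u 0 + v 1 * u 1 := by
    intro u
    rw [hAm, hdotT, ← hvdef]
    simp [dotProduct, Fin.sum_univ_two]
  have h4 : x ⬝ᵥ A.mulVec c = v 0 := by
    rw [hACc, hdotT, ← hvdef]
    simp [dotProduct, Fin.sum_univ_two]
  have h5 : x ⬝ᵥ A.mulVec x = v 0 ^ 2 + v 1 ^ 2 := by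
    have hax : A.mulVec x = Cᵀ.mulVec v := by rw [← hCtC, ← Matrix.mulVec_mulVec, ← hvdef]
    rw [hax, hdotT, ← hvdef]
    simp [dotProduct, Fin.sum_univ_two]; ring
  -- complex preliminaries
  have hτ0 : τ ≠ 0 := fun h => by simp [h] at hτ
  have hz0 : z ≠ 0 := fun h => by simp [h] at hz
  have hIz : 0 < (-I * z).re := by simpa using hz
  have hIτ : 0 < (-I * τ).re := by simpa using hτ
  set g₁ : ℝ → ℂ := fun a =>
    (a : ℂ) * Complex.exp (-(Real.pi : ℂ) * (-I * z) * a ^ 2 + -2 * Real.pi * I * (v 0) * a)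
    with hg₁
  set g₂ : ℝ → ℂ := fun a =>
    Complex.exp (-(Real.pi : ℂ) * (-I * τ) * a ^ 2 + -2 * Real.pi * I * (v 1) * a) with hg₂
  have hpt : ∀ u : Fin 2 → ℝ,
      f τ z (D.mulVec u) *
        Complex.exp (-(2 * Real.pi * I * ((x ⬝ᵥ A.mulVec (D.mulVec u) : ℝ) : ℂ))) =
      g₁ (u 0) * g₂ (u 1) := by
    intro u
    rw [hf, h1 u, h2 u, h3 u, hg₁, hg₂]
    simp only [mul_assoc, ← Complex.exp_add]
    congr 2
    push_cast
    ring
  conv_rhs => rw [hf]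
  rw [h4, h5]
  rw [integral_comp_mulVec_aux hdetD]
  simp only [hpt]
  have hprod : (∫ u : Fin 2 → ℝ, g₁ (u 0) * g₂ (u 1)) = (∫ a : ℝ, g₁ a) * ∫ a : ℝ, g₂ a := by
    have h := (MeasureTheory.volume_preserving_finTwoArrow ℝ).integral_comp
      (MeasurableEquiv.measurableEmbedding _) (fun p : ℝ × ℝ => g₁ p.1 * g₂ p.2)
    have h2 : (∫ p : ℝ × ℝ, g₁ p.1 * g₂ p.2) = (∫ a : ℝ, g₁ a) * ∫ a : ℝ, g₂ a := by
      rw [MeasureTheory.Measure.volume_eq_prod]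
      exact MeasureTheory.integral_prod_mul g₁ g₂
    rw [← h2, ← h]
    congr 1 with u
  rw [hprod, hg₁, hg₂, gauss_mul hIz (v 0), gauss_plain hIτ (v 1)]
  -- final algebra
  have hexp : Complex.exp (-(Real.pi : ℂ) / (-I * z) * (v 0 : ℂ) ^ 2) *
      Complex.exp (-(Real.pi : ℂ) / (-I * τ) * (v 1 : ℂ) ^ 2) =
      Complex.exp (2 * Real.pi * I * ((((v 0 : ℝ) ^ 2 + (v 1 : ℝ) ^ 2 : ℝ) : ℂ) / 2) * (-1 / τ)) *
      Complex.exp (Real.pi * I * (-1 / z - -1 / τ) * ((v 0 : ℝ) : ℂ) ^ 2) := by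
    rw [← Complex.exp_add, ← Complex.exp_add]
    congr 1
    have hIz0 : -I * z ≠ 0 := by intro h; rw [h] at hIz; simp at hIz
    have hIτ0 : -I * τ ≠ 0 := by intro h; rw [h] at hIτ; simp at hIτ
    field_simp
    ring_nf
    simp only [Complex.I_sq, Complex.ofReal_add, Complex.ofReal_pow]
    ring
  rw [habsD, hsA]
  push_cast at hexp ⊢
  linear_combination (((|C.det| : ℝ) : ℂ))⁻¹ * (-I) * ((-I * z) ^ (-(3 / 2) : ℂ)) *
    ((-I * τ) ^ (-(1 / 2) : ℂ)) * ((v 0 : ℝ) : ℂ) * hexp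
end
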